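/- arXiv:2502.16712 — 6 statements merged into one kernel-verified Lean document; each statement's English description precedes it below -/
import Mathlib

section
/- Let X and Y be compact Hausdorff spaces and let T : C(X) → C(Y) be a (not necessarily surjective) linear isometry between the Banach spaces of continuous complex-valued functions with the supremum norm. Then there exist a nonempty closed subset Y₀ of Y, a continuous surjection t : Y₀ → X, and a continuous function w : Y₀ → ℂ with |w(y)| = 1 for all y ∈ Y₀, such that (Tf)(y) = w(y)·f(t(y)) for every y ∈ Y₀ and every f ∈ C(X). -/
open ContinuousMap

noncomputable section

theorem holsz_exists {X Y : Type*} [TopologicalSpace X] [CompactSpace X] [T2Space X] [Nonempty X]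
    [TopologicalSpace Y] [CompactSpace Y] [T2Space Y] [Nonempty Y]
    (T : C(X, ℂ) →ₗᵢ[ℂ] C(Y, ℂ)) (x : X) :
    ∃ y : Y, ‖(T 1) y‖ = 1 ∧ ∀ f : C(X, ℂ), (T f) y = (T 1) y * f x := by
  classical
  set P : Set C(X, ℂ) := {f | ‖f‖ = 1 ∧ f x = 1} with hP
  have hmemP : ∀ f : C(X, ℂ), f x = 1 → (∀ z, ‖f z‖ ≤ 1) → f ∈ P := by
    intro f hfx hb
    refine ⟨le_antisymm (norm_le _ zero_le_one |>.mpr fun z => hb z) ?_, hfx⟩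
    calc (1:ℝ) = ‖f x‖ := by simp [hfx]
    _ ≤ ‖f‖ := f.norm_coe_le_norm x
  have h1P : (1 : C(X, ℂ)) ∈ P := hmemP 1 rfl (by simp)
  have hPne : P.Nonempty := ⟨1, h1P⟩
  have hTb : ∀ f ∈ P, ∀ y : Y, ‖(T f) y‖ ≤ 1 := by
    intro f hf y
    calc ‖(T f) y‖ = ‖(T f) y‖ := rfl
    _ ≤ ‖T f‖ := (T f).norm_coe_le_norm y
    _ = 1 := by rw [T.norm_map]; exact hf.1
  have hvb : ∀ f ∈ P, ∀ z : X, ‖f z‖ ≤ 1 := by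
    intro f hf z
    calc ‖f z‖ = ‖f z‖ := rfl
    _ ≤ ‖f‖ := f.norm_coe_le_norm z
    _ = 1 := hf.1
  set M : P → Set Y := fun f => {y | ‖(T f) y‖ = 1} with hM
  have hMclosed : ∀ f : P, IsClosed (M f) :=
    fun f => isClosed_eq (continuous_norm.comp (T f).continuous) continuous_const
  have hMne : ∀ f : P, (M f).Nonempty := by
    intro ⟨f, hf⟩
    obtain ⟨y, -, hy⟩ := isCompact_univ.exists_isMaxOn Set.univ_nonempty
      ((continuous_norm.comp (T f).continuous).continuousOn)
    refine ⟨y, le_antisymm (hTb f hf y) ?_⟩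
    have h2 : ‖T f‖ ≤ ‖(T f) y‖ :=
      (norm_le _ (norm_nonneg _)).mpr fun z => hy (Set.mem_univ z)
    calc (1:ℝ) = ‖T f‖ := by rw [T.norm_map]; exact hf.1.symm
    _ ≤ _ := h2
  have havg : ∀ f ∈ P, ∀ g ∈ P, (2⁻¹ : ℂ) • (f + g) ∈ P ∧
      ∀ y : Y, ‖(T ((2⁻¹ : ℂ) • (f + g))) y‖ = 1 →
        (T f) y = (T g) y ∧ ‖(T f) y‖ = 1 := by
    intro f hf g hg
    have hmem : (2⁻¹ : ℂ) • (f + g) ∈ P := by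
      refine hmemP _ (by simp [hf.2, hg.2]; ring) fun z => ?_
      have expand : (((2⁻¹ : ℂ) • (f + g) : C(X, ℂ))) z = 2⁻¹ * (f z + g z) := by
        rw [ContinuousMap.smul_apply, ContinuousMap.add_apply, smul_eq_mul]
      rw [expand, norm_mul]
      have habs2 : ‖(2⁻¹ : ℂ)‖ = 2⁻¹ := by
        rw [norm_inv, Complex.norm_two]
      rw [habs2]
      have h1 := hvb f hf z
      have h2 := hvb g hg z
      have h3 := norm_add_le (f z) (g z)
      nlinarith
    refine ⟨hmem, fun y hy => ?_⟩
    have key : ‖(T f) y + (T g) y‖ = 2 := by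
      have h0 : (T ((2⁻¹ : ℂ) • (f + g))) y = 2⁻¹ * ((T f) y + (T g) y) := by
        rw [map_smul, map_add]
        rw [ContinuousMap.smul_apply, ContinuousMap.add_apply]
        simp [smul_eq_mul]
      rw [h0, norm_mul] at hy
      have h1 : ‖(2⁻¹ : ℂ)‖ = 2⁻¹ := by norm_num [norm_inv]
      rw [h1] at hy
      linarith [hy]
    have h1 := hTb f hf y
    have h2 := hTb g hg y
    have h3 := norm_add_le ((T f) y) ((T g) y)
    have haf : ‖(T f) y‖ = 1 := le_antisymm h1 (by linarith)
    have hag : ‖(T g) y‖ = 1 := le_antisymm h2 (by linarith)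
    refine ⟨?_, haf⟩
    apply eq_of_norm_eq_of_norm_add_eq
    · simp [haf, hag]
    · simp only [haf, hag, key]; norm_num
  -- intersection nonempty
  have hdir : Directed (· ⊇ ·) M := by
    rintro ⟨f, hf⟩ ⟨g, hg⟩
    obtain ⟨hmem, hkey⟩ := havg f hf g hg
    refine ⟨⟨_, hmem⟩, ?_, ?_⟩
    · intro y hy
      exact (hkey y hy).2
    · intro y hy
      have h := hkey y hy
      have := h.2
      rw [h.1] at this
      exact this
  have : Nonempty P := hPne.to_subtype
  obtain ⟨y, hy⟩ := IsCompact.nonempty_iInter_of_directed_nonempty_isCompact_isClosed M hdir hMne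
    (fun f => (hMclosed f).isCompact) hMclosed
  simp only [Set.mem_iInter] at hy
  have hyM : ∀ f ∈ P, ‖(T f) y‖ = 1 := fun f hf => hy ⟨f, hf⟩
  -- claim A : T f y = T 1 y for f ∈ P
  have claimA : ∀ f ∈ P, (T f) y = (T 1) y := by
    intro f hf
    obtain ⟨hmem, hkey⟩ := havg f hf 1 h1P
    exact (hkey y (hyM _ hmem)).1
  have hw1 : ‖(T 1) y‖ = 1 := hyM 1 h1P
  -- claim B : f x = 0 → T f y = 0
  have claimB : ∀ f : C(X, ℂ), f x = 0 → (T f) y = 0 := by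
    intro f hfx
    by_contra ha
    set a : ℂ := (T f) y with haa
    have hfne : f ≠ 0 := by
      intro h; apply ha; rw [haa, h]; simp
    have hc : (0:ℝ) < ‖f‖ := norm_pos_iff.mpr hfne
    have habs : 0 < ‖a‖ := by
      simpa [norm_pos_iff] using ha
    -- choose ε
    set ε : ℝ := ‖a‖ / 2 with hε
    have hεpos : 0 < ε := by positivity
    -- Urysohn
    set U : Set X := {z | ‖f z‖ < ε} with hU
    have hUopen : IsOpen U := isOpen_lt (continuous_norm.comp f.continuous) continuous_const
    have hxU : x ∈ U := by simp [hU, hfx, hεpos]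
    obtain ⟨g, hg0, hg1, hgle⟩ := exists_continuous_zero_one_of_isClosed
      (isClosed_compl_iff.mpr hUopen) (isClosed_singleton (x := x))
      (by simpa [Set.disjoint_singleton_right] using hxU)
    set hC : C(X, ℂ) := (⟨Complex.ofReal, Complex.continuous_ofReal⟩ : C(ℝ, ℂ)).comp g with hhC
    have hCval : ∀ z, hC z = (g z : ℂ) := fun z => rfl
    have hCx : hC x = 1 := by rw [hCval, hg1 rfl]; norm_num
    have hCb : ∀ z, ‖hC z‖ ≤ 1 := by
      intro z
      rw [hCval]
      have := hgle z
      simp only [Set.mem_Icc] at this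
      rw [Complex.norm_real, Real.norm_eq_abs, abs_of_nonneg this.1]
      exact this.2
    have hCP : hC ∈ P := hmemP hC hCx hCb
    -- the weight value
    set wv : ℂ := (T 1) y with hwv
    have hThC : (T hC) y = wv := claimA hC hCP
    -- the scalar
    set δ : ℝ := ‖f‖⁻¹ with hδ
    have hδpos : 0 < δ := by positivity
    set α : ℂ := (δ : ℂ) * wv * (‖a‖ : ℂ) * a⁻¹ with hα
    have hαabs : ‖α‖ = δ := by
      rw [hα]
      rw [norm_mul, norm_mul, norm_mul, norm_inv, Complex.norm_real, Real.norm_eq_abs, Complex.norm_real, Real.norm_eq_abs, hw1]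
      rw [abs_of_nonneg hδpos.le, abs_of_nonneg (norm_nonneg a)]
      field_simp
    have hαnorm : ‖α‖ = δ := hαabs
    have hαa : α * a = (δ : ℂ) * wv * (‖a‖ : ℂ) := by
      rw [hα]
      field_simp
    -- compute T at y
    have hval : (T (hC + α • f)) y = wv * (1 + (δ : ℂ) * (‖a‖ : ℂ)) := by
      rw [map_add, map_smul]
      rw [ContinuousMap.add_apply, ContinuousMap.smul_apply, smul_eq_mul, hThC, hαa]
      ring
    have hvalabs : ‖(T (hC + α • f)) y‖ = 1 + δ * ‖a‖ := by
      rw [hval, norm_mul, hw1, one_mul]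
      have : ((1 : ℂ) + (δ : ℂ) * (‖a‖ : ℂ)) = ((1 + δ * ‖a‖ : ℝ) : ℂ) := by
        push_cast; ring
      rw [this, Complex.norm_real, Real.norm_eq_abs, abs_of_nonneg (by positivity)]
    -- norm bound
    have hnorm : ‖hC + α • f‖ ≤ 1 + δ * ε := by
      apply (norm_le _ (by positivity)).mpr
      intro z
      rw [ContinuousMap.add_apply, ContinuousMap.smul_apply, smul_eq_mul]
      by_cases hz : z ∈ U
      · calc ‖hC z + α * f z‖ ≤ ‖hC z‖ + ‖α * f z‖ := norm_add_le _ _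
        _ ≤ 1 + δ * ε := by
            apply add_le_add (hCb z)
            rw [norm_mul]
            have h1 : ‖α‖ = δ := hαabs
            have h2 : ‖f z‖ ≤ ε := le_of_lt hz
            calc ‖α‖ * ‖f z‖ ≤ δ * ε := by
                  rw [h1]; exact mul_le_mul_of_nonneg_left h2 hδpos.le
            _ ≤ δ * ε := le_refl _
      · have hz0 : hC z = 0 := by
          rw [hCval]
          rw [hg0 hz]
          norm_num
        rw [hz0, zero_add, norm_mul]
        have h2 : ‖f z‖ ≤ ‖f‖ := f.norm_coe_le_norm z
        calc ‖α‖ * ‖f z‖ ≤ δ * ‖f‖ := by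
              rw [hαnorm]; exact mul_le_mul_of_nonneg_left h2 hδpos.le
        _ = 1 := by rw [hδ]; field_simp
        _ ≤ 1 + δ * ε := by nlinarith
    -- contradiction
    have hTnorm : ‖T (hC + α • f)‖ = ‖hC + α • f‖ := T.norm_map _
    have hb : 1 + δ * ‖a‖ ≤ 1 + δ * ε := by
      calc 1 + δ * ‖a‖ = ‖(T (hC + α • f)) y‖ := hvalabs.symm
      _ = ‖(T (hC + α • f)) y‖ := rfl
      _ ≤ ‖T (hC + α • f)‖ := (T _).norm_coe_le_norm y
      _ = ‖hC + α • f‖ := hTnorm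
      _ ≤ 1 + δ * ε := hnorm
    have : ‖a‖ ≤ ε := by
      have := (mul_le_mul_iff_right₀ hδpos).mp (by linarith : δ * ‖a‖ ≤ δ * ε)
      exact this
    rw [hε] at this
    linarith
  -- combine
  refine ⟨y, hw1, fun f => ?_⟩
  have hdz : (f - (f x) • 1 : C(X, ℂ)) x = 0 := by
    simp [ContinuousMap.sub_apply, ContinuousMap.smul_apply]
  have h0 := claimB _ hdz
  rw [map_sub, map_smul] at h0
  rw [ContinuousMap.sub_apply, ContinuousMap.smul_apply, smul_eq_mul, sub_eq_zero] at h0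
  rw [h0]; ring

/-- **Holsztyński's theorem.** If `X` and `Y` are compact Hausdorff spaces and
`T : C(X) → C(Y)` is a (not necessarily surjective) linear isometry of the Banach spaces of
continuous complex-valued functions with the sup norm, then there are a nonempty closed subset
`Y₀ ⊆ Y`, a continuous surjection `t : Y₀ → X` and a continuous unimodular weight
`w : Y₀ → ℂ` such that `(T f) y = w y * f (t y)` for every `y ∈ Y₀` and `f ∈ C(X)`. -/
theorem holsztynski {X Y : Type*} [TopologicalSpace X] [CompactSpace X] [T2Space X] [Nonempty X]
    [TopologicalSpace Y] [CompactSpace Y] [T2Space Y]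
    (T : C(X, ℂ) →ₗᵢ[ℂ] C(Y, ℂ)) :
    ∃ Y₀ : Set Y, Y₀.Nonempty ∧ IsClosed Y₀ ∧
      ∃ (t : Y₀ → X) (w : Y₀ → ℂ),
        Continuous t ∧ Function.Surjective t ∧
        Continuous w ∧ (∀ y : Y₀, ‖w y‖ = 1) ∧
        ∀ (f : C(X, ℂ)) (y : Y₀), T f (y : Y) = w y * f (t y) := by
  classical
  -- Y is nonempty
  have hY : Nonempty Y := by
    by_contra h
    have hT1 : T 1 = 0 := by
      ext y
      exact absurd (Nonempty.intro y) h
    have : ‖(1 : C(X, ℂ))‖ = 0 := by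
      rw [← T.norm_map 1, hT1, norm_zero]
    rw [norm_one] at this
    norm_num at this
  set K : Set (X × Y) := {p | ‖(T 1) p.2‖ = 1 ∧ ∀ f : C(X, ℂ), (T f) p.2 = (T 1) p.2 * f p.1}
    with hK
  have hKclosed : IsClosed K := by
    have h1 : IsClosed {p : X × Y | ‖(T 1) p.2‖ = 1} :=
      isClosed_eq (continuous_norm.comp ((T 1).continuous.comp continuous_snd))
        continuous_const
    have h2 : IsClosed {p : X × Y | ∀ f : C(X, ℂ), (T f) p.2 = (T 1) p.2 * f p.1} := by
      have : {p : X × Y | ∀ f : C(X, ℂ), (T f) p.2 = (T 1) p.2 * f p.1} =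
          ⋂ f : C(X, ℂ), {p : X × Y | (T f) p.2 = (T 1) p.2 * f p.1} := by
        ext p; simp
      rw [this]
      exact isClosed_iInter fun f =>
        isClosed_eq ((T f).continuous.comp continuous_snd)
          (((T 1).continuous.comp continuous_snd).mul (f.continuous.comp continuous_fst))
    exact h1.inter h2
  have hKcompact : IsCompact K := hKclosed.isCompact
  -- uniqueness of the x-coordinate
  have huniq : ∀ x x' y', (x, y') ∈ K → (x', y') ∈ K → x = x' := by
    intro x x' y' h1 h2
    by_contra hne
    have hw : ‖(T 1) y'‖ = 1 := h1.1
    have hsep : ∀ f : C(X, ℂ), f x = f x' := by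
      intro f
      have e1 := h1.2 f
      have e2 := h2.2 f
      have hwne : (T 1) y' ≠ 0 := by
        intro h; rw [h] at hw; simp at hw
      have := e1.symm.trans e2
      exact mul_left_cancel₀ hwne this
    -- separate points by a continuous function
    obtain ⟨g, hg0, hg1, -⟩ := exists_continuous_zero_one_of_isClosed
      (isClosed_singleton (x := x)) (isClosed_singleton (x := x'))
      (Set.disjoint_singleton.mpr hne)
    set gC : C(X, ℂ) := (⟨Complex.ofReal, Complex.continuous_ofReal⟩ : C(ℝ, ℂ)).comp g with hgC
    have := hsep gC
    have e0 : gC x = 0 := by show ((g x : ℝ) : ℂ) = 0; rw [hg0 rfl]; norm_num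
    have e1 : gC x' = 1 := by show ((g x' : ℝ) : ℂ) = 1; rw [hg1 rfl]; norm_num
    rw [e0, e1] at this
    exact zero_ne_one this
  have hex : ∀ x : X, ∃ y : Y, (x, y) ∈ K := fun x => holsz_exists T x
  set Y₀ : Set Y := Prod.snd '' K with hY₀
  have hY₀closed : IsClosed Y₀ := (hKcompact.image continuous_snd).isClosed
  have hY₀ne : Y₀.Nonempty := by
    obtain ⟨x⟩ := (inferInstance : Nonempty X)
    obtain ⟨y, hy⟩ := hex x
    exact ⟨y, ⟨(x, y), hy, rfl⟩⟩
  -- define t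
  have hmem : ∀ y : Y₀, ∃ x : X, (x, (y : Y)) ∈ K := by
    rintro ⟨y, ⟨p, hp, rfl⟩⟩
    exact ⟨p.1, hp⟩
  set t : Y₀ → X := fun y => (hmem y).choose with ht
  have htK : ∀ y : Y₀, (t y, (y : Y)) ∈ K := fun y => (hmem y).choose_spec
  have htuniq : ∀ (y : Y₀) (x : X), (x, (y : Y)) ∈ K → t y = x :=
    fun y x hx => huniq _ _ _ (htK y) hx
  -- continuity of t
  have htcont : Continuous t := by
    rw [continuous_iff_isClosed]
    intro C hC
    have himg : t ⁻¹' C = Subtype.val ⁻¹' (Prod.snd '' (K ∩ C ×ˢ Set.univ)) := by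
      ext y
      simp only [Set.mem_preimage, Set.mem_image]
      constructor
      · intro h
        exact ⟨(t y, (y : Y)), ⟨htK y, h, Set.mem_univ _⟩, rfl⟩
      · rintro ⟨p, ⟨hpK, hpC, -⟩, hpy⟩
        have hp2 : (p.1, (y : Y)) ∈ K := by
          rw [← hpy]
          exact hpK
        have : t y = p.1 := htuniq y p.1 hp2
        rw [this]; exact hpC
    rw [himg]
    exact ((hKcompact.inter_right (hC.prod isClosed_univ)).image continuous_snd).isClosed.preimage
      continuous_subtype_val
  -- surjectivity of t
  have htsurj : Function.Surjective t := by
    intro x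
    obtain ⟨y, hy⟩ := hex x
    exact ⟨⟨y, ⟨(x, y), hy, rfl⟩⟩, htuniq _ _ hy⟩
  -- define w
  set w : Y₀ → ℂ := fun y => (T 1) (y : Y) with hw
  have hwcont : Continuous w := (T 1).continuous.comp continuous_subtype_val
  have hwabs : ∀ y : Y₀, ‖w y‖ = 1 := fun y => (htK y).1
  exact ⟨Y₀, hY₀ne, hY₀closed, t, w, htcont, htsurj, hwcont, hwabs,
    fun f y => (htK y).2 f⟩

end
end

section
/- Let G and H be locally compact Hausdorff maximally almost periodic groups and let T : AP(G) → AP(H) be a non-vanishing linear isometry that respects finite-dimensional unitary representations. Then for every f ∈ AP(G): there exists x ∈ G with ‖f‖ = |f(x)| if and only if there exists y ∈ H with ‖Tf‖ = |(Tf)(y)|. -/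
open scoped BoundedContinuousFunction

noncomputable section

/-- A complex-valued function on a group is *almost periodic* if for every `ε > 0` there is a
finite cover `G = G₁ ∪ … ∪ Gₙ` with `|f (z*x*w) - f (z*y*w)| < ε` whenever `x, y` lie in a
common member of the cover. -/
def IsAlmostPeriodic {G : Type*} [Group G] (f : G → ℂ) : Prop :=
  ∀ ε : ℝ, 0 < ε → ∃ (n : ℕ) (S : Fin n → Set G),
    (⋃ i, S i) = (Set.univ : Set G) ∧
    ∀ (i : Fin n), ∀ z w x y : G, x ∈ S i → y ∈ S i →
      ‖f (z * x * w) - f (z * y * w)‖ < ε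

/-- A continuous finite-dimensional unitary representation, in matrix form. -/
def IsUnitaryRep {G : Type*} [Group G] [TopologicalSpace G] (n : ℕ)
    (D : G → Matrix (Fin n) (Fin n) ℂ) : Prop :=
  Continuous D ∧ (∀ g, D g ∈ Matrix.unitaryGroup (Fin n) ℂ) ∧
    ∀ a b : G, D (a * b) = D a * D b

/-- Maximal almost periodicity: continuous finite-dimensional unitary representations separate
points. -/
def MAPGroup (G : Type*) [Group G] [TopologicalSpace G] : Prop :=
  ∀ ⦃x y : G⦄, x ≠ y → ∃ (n : ℕ) (D : G → Matrix (Fin n) (Fin n) ℂ),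
    IsUnitaryRep n D ∧ D x ≠ D y

/-- `T` respects (finite-dimensional) unitary representations: for every continuous
homomorphism `D = (d_{jk})` of `G` into `U(n)`, the matrix `(T d_{jk})` defines a continuous
homomorphism of `H` into `U(n)`. -/
def RespectsUnitaryRepsB {G H : Type*} [Group G] [TopologicalSpace G]
    [Group H] [TopologicalSpace H] (T : (G →ᵇ ℂ) → (H →ᵇ ℂ)) : Prop :=
  ∀ (n : ℕ) (d : Matrix (Fin n) (Fin n) (G →ᵇ ℂ)),
    (∀ g : G, (Matrix.of fun j k => d j k g) ∈ Matrix.unitaryGroup (Fin n) ℂ) →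
    (∀ a b : G, (Matrix.of fun j k => d j k (a * b)) =
      (Matrix.of fun j k => d j k a) * (Matrix.of fun j k => d j k b)) →
    (∀ h : H, (Matrix.of fun j k => T (d j k) h) ∈ Matrix.unitaryGroup (Fin n) ℂ) ∧
    (∀ a b : H, (Matrix.of fun j k => T (d j k) (a * b)) =
      (Matrix.of fun j k => T (d j k) a) * (Matrix.of fun j k => T (d j k) b))


private lemma ap_congr'' {G : Type*} [Group G] {f g : G → ℂ} (h : ∀ x, f x = g x)
    (hf : IsAlmostPeriodic f) : IsAlmostPeriodic g := by
  intro ε hε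
  obtain ⟨n, S, hcov, hS⟩ := hf ε hε
  refine ⟨n, S, hcov, fun i z w x y hx hy => by
    rw [← h, ← h]; exact hS i z w x y hx hy⟩

private lemma ap_of_const'' {G : Type*} [Group G] (c : ℂ) :
    IsAlmostPeriodic (fun _ : G => c) := by
  intro ε hε
  exact ⟨1, fun _ => Set.univ, by simp [Set.iUnion_const],
    fun i z w x y _ _ => by simpa using hε⟩

private lemma ap_sub_const'' {G : Type*} [Group G] {f : G → ℂ} (hf : IsAlmostPeriodic f) (c : ℂ) :
    IsAlmostPeriodic (fun x => f x - c) := by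
  intro ε hε
  obtain ⟨n, S, hcov, hS⟩ := hf ε hε
  refine ⟨n, S, hcov, fun i z w x y hx hy => ?_⟩
  have := hS i z w x y hx hy
  simpa [sub_sub_sub_cancel_right] using this

private lemma one_mat_fin1'' : (Matrix.of fun (_ _ : Fin 1) => (1:ℂ)) = 1 := by
  ext j k; fin_cases j; fin_cases k; simp

private lemma unimodular_T_one'' {G H : Type*} [Group G] [TopologicalSpace G]
    [Group H] [TopologicalSpace H] (T : (G →ᵇ ℂ) → (H →ᵇ ℂ))
    (hTrep : RespectsUnitaryRepsB T) (h : H) :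
    ‖T 1 h‖ = 1 := by
  set d : Matrix (Fin 1) (Fin 1) (G →ᵇ ℂ) := Matrix.of fun _ _ => 1 with hd
  have e : ∀ g : G, (Matrix.of fun j k => d j k g) = 1 := by
    intro g
    rw [← one_mat_fin1'']; rfl
  have h1 : ∀ g : G, (Matrix.of fun j k => d j k g) ∈ Matrix.unitaryGroup (Fin 1) ℂ := by
    intro g; rw [e]; exact one_mem _
  have h2 : ∀ a b : G, (Matrix.of fun j k => d j k (a * b)) =
      (Matrix.of fun j k => d j k a) * (Matrix.of fun j k => d j k b) := by
    intro a b; rw [e, e, e, one_mul]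
  obtain ⟨hU, _⟩ := hTrep 1 d h1 h2
  have hm := hU h
  rw [Matrix.mem_unitaryGroup_iff] at hm
  have hmm := congrArg (fun A => A 0 0) hm
  simp only [Matrix.mul_apply, Matrix.star_apply, Matrix.one_apply_eq, Fin.sum_univ_one,
    Matrix.of_apply] at hmm
  have hc : T (1 : G →ᵇ ℂ) h * (starRingEnd ℂ) (T 1 h) = 1 := by
    simpa [hd] using hmm
  rw [Complex.mul_conj] at hc
  have hns : Complex.normSq (T 1 h) = 1 := by exact_mod_cast hc
  rw [Complex.norm_def, hns, Real.sqrt_one]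

/-- Let `G`, `H` be locally compact Hausdorff maximally almost periodic groups and let
`T : AP(G) → AP(H)` be a non-vanishing linear isometry respecting finite-dimensional unitary
representations. Then for every `f ∈ AP(G)`: `‖f‖ = |f x|` for some `x ∈ G` iff
`‖T f‖ = |(T f) y|` for some `y ∈ H`. -/
theorem norm_attained_iff_norm_attained
    {G H : Type*} [Group G] [TopologicalSpace G] [IsTopologicalGroup G]
    [LocallyCompactSpace G] [T2Space G]
    [Group H] [TopologicalSpace H] [IsTopologicalGroup H]
    [LocallyCompactSpace H] [T2Space H]
    (hGmap : MAPGroup G) (hHmap : MAPGroup H)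
    (T : (G →ᵇ ℂ) → (H →ᵇ ℂ))
    (hTap : ∀ f : G →ᵇ ℂ, IsAlmostPeriodic ⇑f → IsAlmostPeriodic ⇑(T f))
    (hTadd : ∀ f g : G →ᵇ ℂ, IsAlmostPeriodic ⇑f → IsAlmostPeriodic ⇑g →
      T (f + g) = T f + T g)
    (hTsmul : ∀ (c : ℂ) (f : G →ᵇ ℂ), IsAlmostPeriodic ⇑f → T (c • f) = c • T f)
    (hTiso : ∀ f : G →ᵇ ℂ, IsAlmostPeriodic ⇑f → ‖T f‖ = ‖f‖)
    (hTnv : ∀ f : G →ᵇ ℂ, IsAlmostPeriodic ⇑f →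
      ((∀ y : H, T f y ≠ 0) ↔ ∀ x : G, f x ≠ 0))
    (hTrep : RespectsUnitaryRepsB T) :
    ∀ f : G →ᵇ ℂ, IsAlmostPeriodic ⇑f →
      ((∃ x : G, ‖f‖ = ‖f x‖) ↔ ∃ y : H, ‖T f‖ = ‖T f y‖) := by
  intro f hf
  have hT1 : ∀ y : H, ‖T 1 y‖ = 1 := unimodular_T_one'' T hTrep
  have ap1 : IsAlmostPeriodic ⇑(1 : G →ᵇ ℂ) :=
    ap_congr'' (fun x => by simp) (ap_of_const'' (1:ℂ))
  have hco : ∀ (l : ℂ) (x : G), (f + (-l) • (1 : G →ᵇ ℂ)) x = f x - l := by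
    intro l x
    simp [sub_eq_add_neg]
  have hsm : ∀ l : ℂ, IsAlmostPeriodic ⇑((-l) • (1 : G →ᵇ ℂ)) :=
    fun l => ap_congr'' (fun x => by simp) (ap_of_const'' (-l))
  have hgap : ∀ l : ℂ, IsAlmostPeriodic ⇑(f + (-l) • (1 : G →ᵇ ℂ)) :=
    fun l => ap_congr'' (fun x => (hco l x).symm) (ap_sub_const'' hf l)
  have hTg : ∀ l : ℂ, T (f + (-l) • (1 : G →ᵇ ℂ)) = T f + (-l) • T 1 := by
    intro l
    rw [hTadd f ((-l) • (1 : G →ᵇ ℂ)) hf (hsm l), hTsmul (-l) 1 ap1]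
  constructor
  · rintro ⟨x, hx⟩
    set l := f x with hl
    have hzero : ¬ ∀ x' : G, (f + (-l) • (1 : G →ᵇ ℂ)) x' ≠ 0 := by
      intro hall
      exact hall x (by rw [hco l x, hl, sub_self])
    have h2 : ¬ ∀ y : H, T (f + (-l) • (1 : G →ᵇ ℂ)) y ≠ 0 :=
      fun hy => hzero ((hTnv _ (hgap l)).mp hy)
    push_neg at h2
    obtain ⟨y, hy0⟩ := h2
    rw [hTg l] at hy0
    simp only [BoundedContinuousFunction.coe_add, BoundedContinuousFunction.coe_smul,
      Pi.add_apply, Pi.smul_apply, smul_eq_mul] at hy0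
    have heq : T f y = l * T 1 y := by linear_combination hy0
    refine ⟨y, ?_⟩
    rw [hTiso f hf, hx, heq, norm_mul, hT1 y, mul_one]
  · rintro ⟨y, hy⟩
    have hne : T (1 : G →ᵇ ℂ) y ≠ 0 := by
      intro h0
      have := hT1 y
      rw [h0] at this
      simp at this
    set l := T f y / T 1 y with hl
    have habsl : ‖l‖ = ‖f‖ := by
      rw [hl, norm_div, hT1 y, div_one, ← hy, hTiso f hf]
    have h0 : T (f + (-l) • (1 : G →ᵇ ℂ)) y = 0 := by
      rw [hTg l]
      simp only [BoundedContinuousFunction.coe_add, BoundedContinuousFunction.coe_smul,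
        Pi.add_apply, Pi.smul_apply, smul_eq_mul]
      have hcl : l * T 1 y = T f y := div_mul_cancel₀ _ hne
      linear_combination -hcl
    have hnall : ¬ ∀ x : G, (f + (-l) • (1 : G →ᵇ ℂ)) x ≠ 0 := by
      intro h
      exact ((hTnv _ (hgap l)).mpr h) y h0
    push_neg at hnall
    obtain ⟨x, hx0⟩ := hnall
    rw [hco l x] at hx0
    have hfx : f x = l := sub_eq_zero.mp hx0
    exact ⟨x, by rw [hfx, habsl]⟩

end
end

section
/- Let G and H be σ-compact maximally almost periodic locally compact Hausdorff groups, and suppose T : AP(G) → AP(H) is a non-vanishing linear isometry of AP(G) onto AP(H) that respects finite-dimensional unitary representations. Then there exist a topological group isomorphism t : H → G and a continuous character γ ∈ Ĥ such that (Tf)(h) = γ(h)·f(t(h)) for all h ∈ H and all f ∈ AP(G). -/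
open scoped BoundedContinuousFunction

noncomputable section

/-- A continuous character: a continuous homomorphism into the circle group `𝕋 ⊆ ℂ`. -/
def IsCharacter {H : Type*} [Group H] [TopologicalSpace H] (γ : H → ℂ) : Prop :=
  Continuous γ ∧ (∀ h, ‖γ h‖ = 1) ∧ ∀ a b : H, γ (a * b) = γ a * γ b

/-- The Bohr topology on a topological group: the initial topology induced by the family of all
continuous finite-dimensional unitary representations. -/
def bohrTopology (G : Type*) [Group G] [TopologicalSpace G] : TopologicalSpace G :=
  ⨅ (n : ℕ) (D : {D : G → Matrix (Fin n) (Fin n) ℂ // IsUnitaryRep n D}),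
    TopologicalSpace.induced D.1 inferInstance

/-- A topological group respects compactness if every subset compact in the Bohr topology is
compact in the original topology. -/
def RespectsCompactness (G : Type*) [Group G] [TopologicalSpace G] : Prop :=
  ∀ s : Set G, @IsCompact G (bohrTopology G) s → IsCompact s

universe u
/-- A space is realcompact if it admits a closed embedding into a product of copies of `ℝ`. -/
def IsRealcompact (X : Type u) (τ : TopologicalSpace X) : Prop :=
  ∃ (ι : Type u) (f : X → ι → ℝ), @Topology.IsClosedEmbedding X (ι → ℝ) τ inferInstance f

namespace Complex

def abs : AbsoluteValue ℂ ℝ where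
  toFun z := ‖z‖
  map_mul' := norm_mul
  nonneg' := norm_nonneg
  eq_zero' _ := norm_eq_zero
  add_le' := norm_add_le

theorem norm_eq_abs (z : ℂ) : ‖z‖ = abs z := rfl

theorem abs_apply (z : ℂ) : abs z = Real.sqrt (normSq z) := by
  show ‖z‖ = _
  rw [← Complex.sq_norm, Real.sqrt_sq (norm_nonneg _)]

theorem abs_conj (z : ℂ) : abs (starRingEnd ℂ z) = abs z := norm_conj z

theorem abs_ofReal (r : ℝ) : abs (r : ℂ) = |r| := by
  show ‖(r : ℂ)‖ = _
  rw [norm_real, Real.norm_eq_abs]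

theorem abs_re_le_abs (z : ℂ) : |z.re| ≤ abs z := abs_re_le_norm z

theorem abs_im_le_abs (z : ℂ) : |z.im| ≤ abs z := abs_im_le_norm z

theorem sq_abs (z : ℂ) : abs z ^ 2 = normSq z := Complex.sq_norm z

end Complex

set_option linter.unusedSectionVars false

namespace APAux

variable {G : Type*} [Group G]

lemma isAP_of_finite {f : G → ℂ}
    (h : ∀ ε : ℝ, 0 < ε → ∃ (ι : Type) (_ : Fintype ι) (S : ι → Set G),
      (⋃ i, S i) = (Set.univ : Set G) ∧ ∀ i, ∀ z w x y : G, x ∈ S i → y ∈ S i →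
        Complex.abs (f (z * x * w) - f (z * y * w)) < ε) : IsAlmostPeriodic f := by
  intro ε hε
  obtain ⟨ι, hι, S, hcov, hosc⟩ := h ε hε
  refine ⟨Fintype.card ι, S ∘ (Fintype.equivFin ι).symm, ?_, ?_⟩
  · apply Set.eq_univ_of_forall
    intro x
    have hx : x ∈ ⋃ i, S i := by rw [hcov]; trivial
    obtain ⟨i, hi⟩ := Set.mem_iUnion.1 hx
    exact Set.mem_iUnion.2 ⟨Fintype.equivFin ι i, by simpa using hi⟩
  · intro i z w x y hx hy
    exact hosc _ z w x y hx hy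

lemma ap_const (c : ℂ) : IsAlmostPeriodic (fun _ : G => c) := by
  intro ε hε
  exact ⟨1, fun _ => Set.univ, by rw [Set.iUnion_const], fun i z w x y _ _ => by simpa using hε⟩

/-- common refinement helper -/
lemma ap_pair {f g : G → ℂ} (hf : IsAlmostPeriodic f) (hg : IsAlmostPeriodic g)
    {ε : ℝ} (hε : 0 < ε) :
    ∃ (ι : Type) (_ : Fintype ι) (S : ι → Set G),
      (⋃ i, S i) = (Set.univ : Set G) ∧ ∀ i, ∀ z w x y : G, x ∈ S i → y ∈ S i →
        Complex.abs (f (z * x * w) - f (z * y * w)) < ε ∧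
        Complex.abs (g (z * x * w) - g (z * y * w)) < ε := by
  obtain ⟨n, Sf, hfc, hfo⟩ := hf ε hε
  obtain ⟨m, Sg, hgc, hgo⟩ := hg ε hε
  refine ⟨Fin n × Fin m, inferInstance, fun p => Sf p.1 ∩ Sg p.2, ?_, ?_⟩
  · apply Set.eq_univ_of_forall
    intro x
    have hx1 : x ∈ ⋃ i, Sf i := by rw [hfc]; trivial
    have hx2 : x ∈ ⋃ i, Sg i := by rw [hgc]; trivial
    obtain ⟨i, hi⟩ := Set.mem_iUnion.1 hx1
    obtain ⟨j, hj⟩ := Set.mem_iUnion.1 hx2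
    exact Set.mem_iUnion.2 ⟨(i, j), hi, hj⟩
  · rintro ⟨i, j⟩ z w x y ⟨hx1, hx2⟩ ⟨hy1, hy2⟩
    exact ⟨hfo i z w x y hx1 hy1, hgo j z w x y hx2 hy2⟩

lemma ap_add {f g : G → ℂ} (hf : IsAlmostPeriodic f) (hg : IsAlmostPeriodic g) :
    IsAlmostPeriodic (fun x => f x + g x) := by
  apply isAP_of_finite
  intro ε hε
  obtain ⟨ι, hι, S, hcov, hosc⟩ := ap_pair hf hg (half_pos hε)
  refine ⟨ι, hι, S, hcov, ?_⟩
  intro i z w x y hx hy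
  obtain ⟨h1, h2⟩ := hosc i z w x y hx hy
  calc Complex.abs (f (z*x*w) + g (z*x*w) - (f (z*y*w) + g (z*y*w)))
      = Complex.abs ((f (z*x*w) - f (z*y*w)) + (g (z*x*w) - g (z*y*w))) := by ring_nf
    _ ≤ Complex.abs (f (z*x*w) - f (z*y*w)) + Complex.abs (g (z*x*w) - g (z*y*w)) :=
        Complex.abs.add_le _ _
    _ < ε / 2 + ε / 2 := add_lt_add h1 h2
    _ = ε := add_halves ε

lemma ap_smul (c : ℂ) {f : G → ℂ} (hf : IsAlmostPeriodic f) :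
    IsAlmostPeriodic (fun x => c * f x) := by
  intro ε hε
  have hε' : 0 < ε / (Complex.abs c + 1) := by positivity
  obtain ⟨n, S, hcov, hosc⟩ := hf _ hε'
  refine ⟨n, S, hcov, ?_⟩
  intro i z w x y hx hy
  have := hosc i z w x y hx hy
  calc Complex.abs (c * f (z*x*w) - c * f (z*y*w))
      = Complex.abs c * Complex.abs (f (z*x*w) - f (z*y*w)) := by
        rw [← map_mul]; ring_nf
    _ ≤ (Complex.abs c + 1) * Complex.abs (f (z*x*w) - f (z*y*w)) := by
        apply mul_le_mul_of_nonneg_right _ (Complex.abs.nonneg _)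
        linarith [Complex.abs.nonneg c]
    _ < (Complex.abs c + 1) * (ε / (Complex.abs c + 1)) := by
        apply mul_lt_mul_of_pos_left this
        positivity
    _ = ε := by field_simp

lemma ap_neg {f : G → ℂ} (hf : IsAlmostPeriodic f) :
    IsAlmostPeriodic (fun x => - f x) := by
  have := ap_smul (-1) hf
  simpa using this

lemma ap_sub {f g : G → ℂ} (hf : IsAlmostPeriodic f) (hg : IsAlmostPeriodic g) :
    IsAlmostPeriodic (fun x => f x - g x) := by
  have := ap_add hf (ap_neg hg)
  simpa [sub_eq_add_neg] using this

lemma ap_mul {f g : G → ℂ} (hf : IsAlmostPeriodic f) (hg : IsAlmostPeriodic g)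
    {Cf Cg : ℝ} (hCf : ∀ x, Complex.abs (f x) ≤ Cf) (hCg : ∀ x, Complex.abs (g x) ≤ Cg) :
    IsAlmostPeriodic (fun x => f x * g x) := by
  apply isAP_of_finite
  intro ε hε
  have hCf0 : 0 ≤ Cf := le_trans (Complex.abs.nonneg _) (hCf 1)
  have hCg0 : 0 ≤ Cg := le_trans (Complex.abs.nonneg _) (hCg 1)
  have hε' : 0 < ε / (Cf + Cg + 1) := by positivity
  obtain ⟨ι, hι, S, hcov, hosc⟩ := ap_pair hf hg hε'
  refine ⟨ι, hι, S, hcov, ?_⟩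
  intro i z w x y hx hy
  obtain ⟨h1, h2⟩ := hosc i z w x y hx hy
  set a := z * x * w
  set b := z * y * w
  calc Complex.abs (f a * g a - f b * g b)
      = Complex.abs (f a * (g a - g b) + (f a - f b) * g b) := by ring_nf
    _ ≤ Complex.abs (f a * (g a - g b)) + Complex.abs ((f a - f b) * g b) :=
        Complex.abs.add_le _ _
    _ = Complex.abs (f a) * Complex.abs (g a - g b)
          + Complex.abs (f a - f b) * Complex.abs (g b) := by rw [map_mul, map_mul]
    _ ≤ Cf * (ε / (Cf + Cg + 1)) + (ε / (Cf + Cg + 1)) * Cg := by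
        apply add_le_add
        · exact mul_le_mul (hCf a) (le_of_lt h2) (Complex.abs.nonneg _) hCf0
        · exact mul_le_mul (le_of_lt h1) (hCg b) (Complex.abs.nonneg _) (le_of_lt hε')
    _ = (Cf + Cg) * (ε / (Cf + Cg + 1)) := by ring
    _ < (Cf + Cg + 1) * (ε / (Cf + Cg + 1)) := by
        apply mul_lt_mul_of_pos_right _ hε'
        linarith
    _ = ε := by field_simp

lemma ap_comp {f : G → ℂ} (hf : IsAlmostPeriodic f) (φ : ℂ → ℂ) (hφ : Continuous φ)
    {M : ℝ} (hM : ∀ x, Complex.abs (f x) ≤ M) :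
    IsAlmostPeriodic (fun x => φ (f x)) := by
  intro ε hε
  have hK : IsCompact (Metric.closedBall (0 : ℂ) M) := isCompact_closedBall _ _
  have huc : UniformContinuousOn φ (Metric.closedBall (0 : ℂ) M) :=
    hK.uniformContinuousOn_of_continuous hφ.continuousOn
  rw [Metric.uniformContinuousOn_iff] at huc
  obtain ⟨δ, hδ, hδε⟩ := huc ε hε
  obtain ⟨n, S, hcov, hosc⟩ := hf δ hδ
  refine ⟨n, S, hcov, ?_⟩
  intro i z w x y hx hy
  have hmem : ∀ u : G, f u ∈ Metric.closedBall (0 : ℂ) M := by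
    intro u
    simpa [Metric.mem_closedBall, Complex.dist_eq, Complex.norm_eq_abs] using hM u
  have hd : dist (f (z*x*w)) (f (z*y*w)) < δ := by
    simpa [Complex.dist_eq] using hosc i z w x y hx hy
  have := hδε _ (hmem (z*x*w)) _ (hmem (z*y*w)) hd
  simpa [Complex.dist_eq] using this

lemma ap_of_uniform_approx {f : G → ℂ}
    (h : ∀ ε : ℝ, 0 < ε → ∃ g : G → ℂ, IsAlmostPeriodic g ∧
      ∀ x, Complex.abs (f x - g x) ≤ ε) : IsAlmostPeriodic f := by
  intro ε hε
  obtain ⟨g, hg, hfg⟩ := h (ε / 4) (by positivity)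
  obtain ⟨n, S, hcov, hosc⟩ := hg (ε / 4) (by positivity)
  refine ⟨n, S, hcov, ?_⟩
  intro i z w x y hx hy
  set a := z * x * w
  set b := z * y * w
  calc Complex.abs (f a - f b)
      = Complex.abs ((f a - g a) + (g a - g b) + (g b - f b)) := by ring_nf
    _ ≤ Complex.abs ((f a - g a) + (g a - g b)) + Complex.abs (g b - f b) :=
        Complex.abs.add_le _ _
    _ ≤ Complex.abs (f a - g a) + Complex.abs (g a - g b) + Complex.abs (g b - f b) := by
        have := Complex.abs.add_le (f a - g a) (g a - g b)
        linarith
    _ < ε / 4 + ε / 4 + ε / 4 := by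
        have h1 := hfg a
        have h2 := hosc i z w x y hx hy
        have h3 : Complex.abs (g b - f b) ≤ ε / 4 := by
          have := hfg b
          rwa [← Complex.abs.map_sub] at this
        have h2' : Complex.abs (g a - g b) < ε / 4 := h2
        apply add_lt_add_of_lt_of_le _ h3
        apply add_lt_add_of_le_of_lt h1 h2'
    _ < ε := by linarith

end APAux

set_option linter.unusedSectionVars false
namespace APAux

section BCF

variable {K : Type*} [Group K] [TopologicalSpace K]

open BoundedContinuousFunction Complex

lemma ap_conj {f : K → ℂ} (hf : IsAlmostPeriodic f) :
    IsAlmostPeriodic (fun x => (starRingEnd ℂ) (f x)) := by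
  intro ε hε
  obtain ⟨n, S, hcov, hosc⟩ := hf ε hε
  refine ⟨n, S, hcov, ?_⟩
  intro i z w x y hx hy
  have : (starRingEnd ℂ) (f (z*x*w)) - (starRingEnd ℂ) (f (z*y*w))
      = (starRingEnd ℂ) (f (z*x*w) - f (z*y*w)) := by rw [map_sub]
  rw [this, Complex.norm_conj]
  exact hosc i z w x y hx hy

lemma apB_add {f g : K →ᵇ ℂ} (hf : IsAlmostPeriodic ⇑f) (hg : IsAlmostPeriodic ⇑g) :
    IsAlmostPeriodic ⇑(f + g) := by
  have := ap_add hf hg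
  exact this

lemma apB_smul (c : ℂ) {f : K →ᵇ ℂ} (hf : IsAlmostPeriodic ⇑f) :
    IsAlmostPeriodic ⇑(c • f) := by
  have := ap_smul c hf
  exact this

lemma apB_zero : IsAlmostPeriodic ⇑(0 : K →ᵇ ℂ) := by
  have := ap_const (G := K) 0
  exact this

lemma apB_one : IsAlmostPeriodic ⇑(1 : K →ᵇ ℂ) := by
  have := ap_const (G := K) 1
  exact this

lemma apB_neg {f : K →ᵇ ℂ} (hf : IsAlmostPeriodic ⇑f) :
    IsAlmostPeriodic ⇑(-f) := by
  have := ap_neg hf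
  exact this

lemma apB_sub {f g : K →ᵇ ℂ} (hf : IsAlmostPeriodic ⇑f) (hg : IsAlmostPeriodic ⇑g) :
    IsAlmostPeriodic ⇑(f - g) := by
  have := ap_sub hf hg
  exact this

lemma apB_mul {f g : K →ᵇ ℂ} (hf : IsAlmostPeriodic ⇑f) (hg : IsAlmostPeriodic ⇑g) :
    IsAlmostPeriodic ⇑(f * g) := by
  have h1 : ∀ x, Complex.abs (f x) ≤ ‖f‖ := fun x => by
    simpa [Complex.norm_eq_abs] using f.norm_coe_le_norm x
  have h2 : ∀ x, Complex.abs (g x) ≤ ‖g‖ := fun x => by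
    simpa [Complex.norm_eq_abs] using g.norm_coe_le_norm x
  have := ap_mul hf hg h1 h2
  exact this

lemma apB_star {f : K →ᵇ ℂ} (hf : IsAlmostPeriodic ⇑f) :
    IsAlmostPeriodic ⇑(star f) := by
  have := ap_conj hf
  exact this

lemma apB_sum {ι : Type*} (s : Finset ι) (w : ι → (K →ᵇ ℂ))
    (hw : ∀ i ∈ s, IsAlmostPeriodic ⇑(w i)) :
    IsAlmostPeriodic ⇑(∑ i ∈ s, w i) := by
  classical
  induction s using Finset.induction_on with
  | empty => simpa using apB_zero
  | insert a s' hnotmem ih =>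
    rw [Finset.sum_insert hnotmem]
    exact apB_add (hw a (Finset.mem_insert_self a s'))
      (ih fun i hi => hw i (Finset.mem_insert_of_mem hi))

/-- real part, as a bounded continuous complex valued function -/
def reB (f : K →ᵇ ℂ) : K →ᵇ ℂ :=
  BoundedContinuousFunction.ofNormedAddCommGroup (fun x => ((f x).re : ℂ))
    (Complex.continuous_ofReal.comp (Complex.continuous_re.comp f.continuous)) ‖f‖
    (fun x => by
      simp only [Complex.norm_eq_abs, Complex.abs_ofReal]
      exact le_trans (Complex.abs_re_le_abs (f x))
        (by simpa [Complex.norm_eq_abs] using f.norm_coe_le_norm x))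

def imB (f : K →ᵇ ℂ) : K →ᵇ ℂ :=
  BoundedContinuousFunction.ofNormedAddCommGroup (fun x => ((f x).im : ℂ))
    (Complex.continuous_ofReal.comp (Complex.continuous_im.comp f.continuous)) ‖f‖
    (fun x => by
      simp only [Complex.norm_eq_abs, Complex.abs_ofReal]
      exact le_trans (Complex.abs_im_le_abs (f x))
        (by simpa [Complex.norm_eq_abs] using f.norm_coe_le_norm x))

@[simp] lemma reB_apply (f : K →ᵇ ℂ) (x : K) : reB f x = ((f x).re : ℂ) := rfl
@[simp] lemma imB_apply (f : K →ᵇ ℂ) (x : K) : imB f x = ((f x).im : ℂ) := rfl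

lemma apB_reB {f : K →ᵇ ℂ} (hf : IsAlmostPeriodic ⇑f) : IsAlmostPeriodic ⇑(reB f) := by
  have h1 : ∀ x, Complex.abs (f x) ≤ ‖f‖ := fun x => by
    simpa [Complex.norm_eq_abs] using f.norm_coe_le_norm x
  have := ap_comp hf (fun z => ((z.re : ℝ) : ℂ))
    (Complex.continuous_ofReal.comp Complex.continuous_re) h1
  exact this

lemma apB_imB {f : K →ᵇ ℂ} (hf : IsAlmostPeriodic ⇑f) : IsAlmostPeriodic ⇑(imB f) := by
  have h1 : ∀ x, Complex.abs (f x) ≤ ‖f‖ := fun x => by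
    simpa [Complex.norm_eq_abs] using f.norm_coe_le_norm x
  have := ap_comp hf (fun z => ((z.im : ℝ) : ℂ))
    (Complex.continuous_ofReal.comp Complex.continuous_im) h1
  exact this

lemma decomp_re_im (f : K →ᵇ ℂ) : f = reB f + Complex.I • imB f := by
  ext x
  simp [smul_eq_mul]
  rw [mul_comm]
  exact (Complex.re_add_im (f x)).symm

lemma decomp_star (f : K →ᵇ ℂ) : star f = reB f - Complex.I • imB f := by
  ext x
  simp [BoundedContinuousFunction.star_apply, Complex.star_def, smul_eq_mul]
  apply Complex.ext <;> simp

end BCF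

end APAux

namespace APAux

section Lam

variable {K : Type*} [Group K] [TopologicalSpace K]
variable (Λ : (K →ᵇ ℂ) → ℂ)

open BoundedContinuousFunction Complex

/-- hypotheses bundle for the key functional -/
structure IsGood : Prop where
  hadd : ∀ f g : K →ᵇ ℂ, IsAlmostPeriodic ⇑f → IsAlmostPeriodic ⇑g → Λ (f + g) = Λ f + Λ g
  hsmul : ∀ (c : ℂ) (f : K →ᵇ ℂ), IsAlmostPeriodic ⇑f → Λ (c • f) = c * Λ f
  hmem : ∀ f : K →ᵇ ℂ, IsAlmostPeriodic ⇑f → ∃ x : K, f x = Λ f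

namespace IsGood

variable {Λ} (hΛ : IsGood Λ)
include hΛ

lemma one : Λ (1 : K →ᵇ ℂ) = 1 := by
  obtain ⟨x, hx⟩ := hΛ.hmem 1 apB_one
  simpa using hx.symm

lemma sub {f g : K →ᵇ ℂ} (hf : IsAlmostPeriodic ⇑f) (hg : IsAlmostPeriodic ⇑g) :
    Λ (f - g) = Λ f - Λ g := by
  have h1 : f - g = f + (-1 : ℂ) • g := by ext x; simp [sub_eq_add_neg]
  rw [h1, hΛ.hadd f ((-1 : ℂ) • g) hf (apB_smul _ hg), hΛ.hsmul (-1) g hg]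
  ring

lemma real_of_real {f : K →ᵇ ℂ} (hf : IsAlmostPeriodic ⇑f)
    (hreal : ∀ x, (f x).im = 0) : (Λ f).im = 0 := by
  obtain ⟨x, hx⟩ := hΛ.hmem f hf
  rw [← hx]; exact hreal x

lemma conj_eq {f : K →ᵇ ℂ} (hf : IsAlmostPeriodic ⇑f) :
    Λ (star f) = (starRingEnd ℂ) (Λ f) := by
  have hre := apB_reB hf
  have him := apB_imB hf
  have hare : (Λ (reB f)).im = 0 := hΛ.real_of_real hre (fun x => by simp)
  have haim : (Λ (imB f)).im = 0 := hΛ.real_of_real him (fun x => by simp)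
  have e1 : Λ f = Λ (reB f) + Complex.I * Λ (imB f) := by
    conv_lhs => rw [decomp_re_im f]
    rw [hΛ.hadd _ _ hre (apB_smul _ him), hΛ.hsmul _ _ him]
  have e2 : Λ (star f) = Λ (reB f) - Complex.I * Λ (imB f) := by
    conv_lhs => rw [decomp_star f]
    rw [hΛ.sub hre (apB_smul _ him), hΛ.hsmul _ _ him]
  rw [e1, e2, map_add, map_mul, Complex.conj_I]
  rw [Complex.conj_eq_iff_im.2 hare, Complex.conj_eq_iff_im.2 haim]
  ring

/-- `Λ (f * star f)` is a nonnegative real -/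
lemma pos_re {f : K →ᵇ ℂ} (hf : IsAlmostPeriodic ⇑f) :
    0 ≤ (Λ (f * star f)).re ∧ (Λ (f * star f)).im = 0 := by
  obtain ⟨x, hx⟩ := hΛ.hmem (f * star f) (apB_mul hf (apB_star hf))
  have hv : (f * star f) x = ((Complex.normSq (f x) : ℝ) : ℂ) := by
    simp [BoundedContinuousFunction.star_apply, Complex.star_def, Complex.mul_conj]
  rw [← hx, hv]
  constructor
  · simpa using Complex.normSq_nonneg (f x)
  · simp

/-- Cauchy–Schwarz null vector lemma -/
lemma cs_null {f g : K →ᵇ ℂ} (hf : IsAlmostPeriodic ⇑f) (hg : IsAlmostPeriodic ⇑g)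
    (h0 : Λ (g * star g) = 0) : Λ (f * star g) = 0 := by
  set z := Λ (f * star g) with hz
  by_contra hzne
  set A := Λ (f * star f) with hA
  obtain ⟨hA0, hAim⟩ := hΛ.pos_re hf
  have hnz : 0 < Complex.normSq z := Complex.normSq_pos.mpr hzne
  set r : ℝ := (A.re + 1) / (2 * Complex.normSq z) with hr
  have hrpos : 0 < r := div_pos (by linarith) (by linarith)
  set t : ℂ := -(r : ℂ) * z with ht
  have hconjmul : g * star f = star (f * star g) := by
    ext x
    simp [BoundedContinuousFunction.star_apply, Complex.star_def]
    ring
  have hgf : Λ (g * star f) = (starRingEnd ℂ) z := by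
    rw [hconjmul, hΛ.conj_eq (apB_mul hf (apB_star hg)), hz]
  have hexp : (f + t • g) * star (f + t • g)
      = f * star f + (starRingEnd ℂ) t • (f * star g)
        + t • (g * star f) + (t * (starRingEnd ℂ) t) • (g * star g) := by
    ext x
    simp [BoundedContinuousFunction.star_apply, Complex.star_def, smul_eq_mul, map_add, map_mul]
    ring
  have hftg : IsAlmostPeriodic ⇑(f + t • g) := apB_add hf (apB_smul _ hg)
  have hfsg := apB_mul hf (apB_star hg)
  have hgsf := apB_mul hg (apB_star hf)
  have hgsg := apB_mul hg (apB_star hg)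
  have hfsf := apB_mul hf (apB_star hf)
  have hval : Λ ((f + t • g) * star (f + t • g))
      = A + (starRingEnd ℂ) t * z + t * (starRingEnd ℂ) z := by
    rw [hexp]
    rw [hΛ.hadd _ _ (apB_add (apB_add hfsf (apB_smul _ hfsg)) (apB_smul _ hgsf))
      (apB_smul _ hgsg)]
    rw [hΛ.hadd _ _ (apB_add hfsf (apB_smul _ hfsg)) (apB_smul _ hgsf)]
    rw [hΛ.hadd _ _ hfsf (apB_smul _ hfsg)]
    rw [hΛ.hsmul _ _ hfsg, hΛ.hsmul _ _ hgsf, hΛ.hsmul _ _ hgsg]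
    rw [h0, hgf]
    ring
  obtain ⟨hp, _⟩ := hΛ.pos_re hftg
  rw [hval] at hp
  have hconjt : (starRingEnd ℂ) t = -(r : ℂ) * (starRingEnd ℂ) z := by
    rw [ht, map_mul, map_neg, Complex.conj_ofReal]
  have h2 : (starRingEnd ℂ) t * z + t * (starRingEnd ℂ) z
      = ((-2 * (r * Complex.normSq z) : ℝ) : ℂ) := by
    rw [hconjt, ht]
    have e1 : -(r:ℂ) * (starRingEnd ℂ) z * z + -(r:ℂ) * z * (starRingEnd ℂ) z
        = -(r:ℂ) * (2 * (z * (starRingEnd ℂ) z)) := by ring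
    rw [e1, Complex.mul_conj]
    push_cast
    ring
  rw [add_assoc, h2] at hp
  rw [Complex.add_re, Complex.ofReal_re] at hp
  have h3 : 2 * (r * Complex.normSq z) = A.re + 1 := by
    rw [hr]
    field_simp
  linarith

/-- multiplication by the conjugate of a unimodular a.p. function -/
lemma unimodular_mul {u : K →ᵇ ℂ} (hu : IsAlmostPeriodic ⇑u)
    (humod : ∀ x, Complex.abs (u x) = 1) {f : K →ᵇ ℂ} (hf : IsAlmostPeriodic ⇑f) :
    Λ (f * star u) = (starRingEnd ℂ) (Λ u) * Λ f := by
  set lam := Λ u with hlam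
  have husq : ∀ x, u x * (starRingEnd ℂ) (u x) = 1 := by
    intro x
    rw [Complex.mul_conj]
    have h := humod x
    rw [← Complex.sq_abs, h]
    norm_num
  have hlmod : lam * (starRingEnd ℂ) lam = 1 := by
    obtain ⟨x, hx⟩ := hΛ.hmem u hu
    rw [hlam, ← hx]
    exact husq x
  set g : K →ᵇ ℂ := u - lam • 1 with hgdef
  have hgap : IsAlmostPeriodic ⇑g := apB_sub hu (apB_smul _ apB_one)
  have hgsg : g * star g = u * star u - (starRingEnd ℂ) lam • u
      - lam • star u + (lam * (starRingEnd ℂ) lam) • 1 := by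
    ext x
    simp [hgdef, BoundedContinuousFunction.star_apply, Complex.star_def, smul_eq_mul,
      map_sub, map_mul]
    ring
  have husu : u * star u = (1 : K →ᵇ ℂ) := by
    ext x
    simp only [BoundedContinuousFunction.coe_mul, Pi.mul_apply,
      BoundedContinuousFunction.star_apply, Complex.star_def,
      BoundedContinuousFunction.coe_one, Pi.one_apply]
    exact husq x
  have hstaru := apB_star hu
  have hΛg : Λ (g * star g) = 0 := by
    rw [hgsg, husu]
    rw [hΛ.hadd _ _ (apB_sub (apB_sub apB_one (apB_smul _ hu)) (apB_smul _ hstaru))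
      (apB_smul _ apB_one)]
    rw [hΛ.sub (apB_sub apB_one (apB_smul _ hu)) (apB_smul _ hstaru)]
    rw [hΛ.sub apB_one (apB_smul _ hu)]
    rw [hΛ.hsmul _ _ hu, hΛ.hsmul _ _ hstaru, hΛ.hsmul _ _ apB_one]
    rw [hΛ.one, hΛ.conj_eq hu, ← hlam]
    rw [mul_one]
    have : (starRingEnd ℂ) lam * lam = 1 := by rw [mul_comm]; exact hlmod
    rw [this, hlmod]
    ring
  have hnull := hΛ.cs_null hf hgap hΛg
  have hsg : f * star g = f * star u - (starRingEnd ℂ) lam • f := by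
    ext x
    simp [hgdef, BoundedContinuousFunction.star_apply, Complex.star_def, smul_eq_mul,
      map_sub, map_mul]
    ring
  rw [hsg] at hnull
  rw [hΛ.sub (apB_mul hf hstaru) (apB_smul _ hf), hΛ.hsmul _ _ hf] at hnull
  exact sub_eq_zero.mp hnull

end IsGood

end Lam

end APAux

namespace APAux

namespace IsGood

open BoundedContinuousFunction Complex

variable {K : Type*} [Group K] [TopologicalSpace K]
variable {Λ : (K →ᵇ ℂ) → ℂ} (hΛ : IsGood Λ)
include hΛ

lemma mul_unimodular {u : K →ᵇ ℂ} (hu : IsAlmostPeriodic ⇑u)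
    (humod : ∀ x, Complex.abs (u x) = 1) {f : K →ᵇ ℂ} (hf : IsAlmostPeriodic ⇑f) :
    Λ (f * u) = Λ u * Λ f := by
  have hsu : IsAlmostPeriodic ⇑(star u) := apB_star hu
  have hsumod : ∀ x, Complex.abs ((star u) x) = 1 := by
    intro x
    simp only [BoundedContinuousFunction.star_apply, Complex.star_def]
    rw [Complex.abs_conj]
    exact humod x
  have h := hΛ.unimodular_mul hsu hsumod hf
  rw [star_star] at h
  rw [h, hΛ.conj_eq hu, Complex.conj_conj]

lemma mul_real {r : K →ᵇ ℂ} (hr : IsAlmostPeriodic ⇑r)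
    (hreal : ∀ x, (r x).im = 0) {f : K →ᵇ ℂ} (hf : IsAlmostPeriodic ⇑f) :
    Λ (f * r) = Λ f * Λ r := by
  set M : ℝ := ‖r‖ + 1 with hM
  have hM0 : 0 < M := by
    have := norm_nonneg r
    simp only [hM]; linarith
  set r' : K →ᵇ ℂ := ((M⁻¹ : ℝ) : ℂ) • r with hr'
  have hr'ap : IsAlmostPeriodic ⇑r' := apB_smul _ hr
  have hr'real : ∀ x, (r' x).im = 0 := by
    intro x
    simp only [hr', BoundedContinuousFunction.coe_smul, Pi.smul_apply, smul_eq_mul]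
    rw [Complex.mul_im]
    simp [hreal x]
  have hr'le : ∀ x, Complex.abs (r' x) ≤ ‖r‖ / M := by
    intro x
    simp only [hr', BoundedContinuousFunction.coe_smul, Pi.smul_apply, smul_eq_mul]
    rw [map_mul, Complex.abs_ofReal, abs_of_pos (inv_pos.mpr hM0)]
    rw [div_eq_inv_mul]
    apply mul_le_mul_of_nonneg_left _ (le_of_lt (inv_pos.mpr hM0))
    simpa [Complex.norm_eq_abs] using r.norm_coe_le_norm x
  have hr'lt : ∀ x, Complex.abs (r' x) ≤ 1 := by
    intro x
    refine le_trans (hr'le x) ?_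
    rw [div_le_one hM0]
    simp only [hM]; linarith
  have hre2 : ∀ x, ((r' x).re)^2 ≤ 1 := by
    intro x
    have h1 : |(r' x).re| ≤ 1 := le_trans (Complex.abs_re_le_abs _) (hr'lt x)
    calc ((r' x).re)^2 = |(r' x).re|^2 := by rw [_root_.sq_abs]
      _ ≤ 1^2 := by apply pow_le_pow_left₀ (abs_nonneg _) h1
      _ = 1 := one_pow 2
  -- the unimodular companion
  set sqf : K → ℂ := fun x => ((Real.sqrt (1 - ((r' x).re)^2) : ℝ) : ℂ) with hsqf
  have hsqcont : Continuous sqf := by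
    apply Complex.continuous_ofReal.comp
    apply Real.continuous_sqrt.comp
    exact (continuous_const.sub ((Complex.continuous_re.comp r'.continuous).pow 2))
  have hsqbd : ∀ x, ‖sqf x‖ ≤ 1 := by
    intro x
    rw [show sqf x = ((Real.sqrt (1 - ((r' x).re)^2) : ℝ) : ℂ) from rfl]
    rw [Complex.norm_eq_abs, Complex.abs_ofReal,
      _root_.abs_of_nonneg (Real.sqrt_nonneg _)]
    calc Real.sqrt (1 - ((r' x).re)^2) ≤ Real.sqrt 1 :=
          Real.sqrt_le_sqrt (by nlinarith [sq_nonneg (r' x).re])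
      _ = 1 := Real.sqrt_one
  set sq : K →ᵇ ℂ := BoundedContinuousFunction.ofNormedAddCommGroup sqf hsqcont 1 hsqbd
    with hsq
  have hsqap : IsAlmostPeriodic ⇑sq := by
    have hb : ∀ x, Complex.abs (r' x) ≤ ‖r'‖ := fun x => by
      simpa [Complex.norm_eq_abs] using r'.norm_coe_le_norm x
    have := ap_comp hr'ap (fun z => ((Real.sqrt (1 - (z.re)^2) : ℝ) : ℂ))
      (Complex.continuous_ofReal.comp (Real.continuous_sqrt.comp
        (continuous_const.sub (Complex.continuous_re.pow 2)))) hb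
    exact this
  set u : K →ᵇ ℂ := r' + Complex.I • sq with hu
  have huap : IsAlmostPeriodic ⇑u := apB_add hr'ap (apB_smul _ hsqap)
  have hrx : ∀ x, r' x = (((r' x).re : ℝ) : ℂ) := by
    intro x
    apply Complex.ext
    · simp
    · simp [hr'real x]
  have hux : ∀ x, u x = ((r' x).re : ℂ) + ((Real.sqrt (1 - ((r' x).re)^2) : ℝ) : ℂ) * Complex.I := by
    intro x
    show r' x + Complex.I • sq x = _
    conv_lhs => rw [hrx x, show sq x = ((Real.sqrt (1 - ((r' x).re)^2) : ℝ) : ℂ) from rfl,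
      smul_eq_mul]
    ring
  have humod : ∀ x, Complex.abs (u x) = 1 := by
    intro x
    rw [hux x]
    rw [Complex.abs_apply, Complex.normSq_add_mul_I]
    rw [Real.sq_sqrt (by linarith [hre2 x])]
    simp
  -- the star of u
  have hstarux : ∀ x, (star u) x = ((r' x).re : ℂ)
      - ((Real.sqrt (1 - ((r' x).re)^2) : ℝ) : ℂ) * Complex.I := by
    intro x
    simp only [BoundedContinuousFunction.star_apply, Complex.star_def]
    rw [hux x, map_add, map_mul, Complex.conj_ofReal, Complex.conj_ofReal, Complex.conj_I]
    ring
  -- u + star u = 2 r'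
  have hsum : u + star u = (2 : ℂ) • r' := by
    ext x
    simp only [BoundedContinuousFunction.coe_add, Pi.add_apply,
      BoundedContinuousFunction.coe_smul, Pi.smul_apply, smul_eq_mul]
    rw [hux x, hstarux x]
    conv_rhs => rw [hrx x]
    ring
  have hm1 : Λ (f * u) = Λ u * Λ f := hΛ.mul_unimodular huap humod hf
  have hm2 : Λ (f * star u) = (starRingEnd ℂ) (Λ u) * Λ f :=
    hΛ.unimodular_mul huap humod hf
  have hfu := apB_mul hf huap
  have hfsu := apB_mul hf (apB_star huap)
  -- combine
  have hcomb : f * u + f * star u = (2 : ℂ) • (f * r') := by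
    have : f * u + f * star u = f * (u + star u) := by ring
    rw [this, hsum]
    exact mul_smul_comm _ _ _
  have hval : Λ (f * u) + Λ (f * star u) = 2 * Λ (f * r') := by
    rw [← hΛ.hadd _ _ hfu hfsu, hcomb, hΛ.hsmul _ _ (apB_mul hf hr'ap)]
  have hr'val : Λ r' = (Λ u + (starRingEnd ℂ) (Λ u)) / 2 := by
    have e : r' = (2⁻¹ : ℂ) • (u + star u) := by
      rw [hsum]
      ext x
      simp [smul_eq_mul]
    rw [e, hΛ.hsmul _ _ (apB_add huap (apB_star huap)),
      hΛ.hadd _ _ huap (apB_star huap), hΛ.conj_eq huap]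
    ring
  have hfr' : Λ (f * r') = Λ f * Λ r' := by
    rw [hm1, hm2] at hval
    rw [hr'val]
    have : (Λ u + (starRingEnd ℂ) (Λ u)) * Λ f = 2 * Λ (f * r') := by
      linear_combination hval
    linear_combination -this / 2
  -- rescale
  have hMneC : (M : ℂ) ≠ 0 := by
    simp only [ne_eq, Complex.ofReal_eq_zero]
    linarith
  have hMinv : ((M⁻¹ : ℝ) : ℂ) = ((M : ℝ) : ℂ)⁻¹ := by push_cast; ring
  have hscale : f * r = (M : ℂ) • (f * r') := by
    ext x
    simp only [hr', BoundedContinuousFunction.coe_mul, Pi.mul_apply,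
      BoundedContinuousFunction.coe_smul, Pi.smul_apply, smul_eq_mul]
    rw [hMinv]
    field_simp
  have hrscale : Λ r = (M : ℂ) * Λ r' := by
    have : r = (M : ℂ) • r' := by
      ext x
      simp only [hr', BoundedContinuousFunction.coe_smul, Pi.smul_apply, smul_eq_mul]
      rw [hMinv]
      field_simp
    conv_lhs => rw [this]
    exact hΛ.hsmul _ _ hr'ap
  rw [hscale, hΛ.hsmul _ _ (apB_mul hf hr'ap), hfr', hrscale]
  ring

lemma mul {f g : K →ᵇ ℂ} (hf : IsAlmostPeriodic ⇑f) (hg : IsAlmostPeriodic ⇑g) :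
    Λ (f * g) = Λ f * Λ g := by
  have hre := apB_reB hg
  have him := apB_imB hg
  have hsplit : f * g = f * reB g + Complex.I • (f * imB g) := by
    conv_lhs => rw [decomp_re_im g]
    ext x
    simp [smul_eq_mul]
    ring
  have h1 : Λ (f * reB g) = Λ f * Λ (reB g) :=
    hΛ.mul_real hre (fun x => by simp) hf
  have h2 : Λ (f * imB g) = Λ f * Λ (imB g) :=
    hΛ.mul_real him (fun x => by simp) hf
  have hgval : Λ g = Λ (reB g) + Complex.I * Λ (imB g) := by
    conv_lhs => rw [decomp_re_im g]
    rw [hΛ.hadd _ _ hre (apB_smul _ him), hΛ.hsmul _ _ him]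
  rw [hsplit, hΛ.hadd _ _ (apB_mul hf hre) (apB_smul _ (apB_mul hf him)),
    hΛ.hsmul _ _ (apB_mul hf him), h1, h2, hgval]
  ring

end IsGood

end APAux

namespace APAux

open BoundedContinuousFunction Complex

/-- The key existence lemma: a functional which is linear on almost periodic functions,
bounded, and whose value on each a.p. function is attained as a value of that function,
is a common evaluation. -/
lemma IsGood.exists_point {K : Type*} [Group K] [TopologicalSpace K] [SigmaCompactSpace K]
    {Λ : (K →ᵇ ℂ) → ℂ} (hΛ : IsGood Λ) (C : ℝ)
    (hbd : ∀ f : K →ᵇ ℂ, IsAlmostPeriodic ⇑f → Complex.abs (Λ f) ≤ C * ‖f‖) :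
    ∃ x : K, ∀ f : K →ᵇ ℂ, IsAlmostPeriodic ⇑f → f x = Λ f := by
  by_contra hcon
  push_neg at hcon
  choose F hFap hFne using hcon
  classical
  -- an open cover coming from the counterexamples
  set U : K → Set K := fun x => {y | F x y ≠ Λ (F x)} with hU
  have hUopen : ∀ x, IsOpen (U x) := by
    intro x
    have : U x = (fun y => F x y - Λ (F x)) ⁻¹' {0}ᶜ := by
      ext y
      simp [hU, sub_eq_zero]
    rw [this]
    exact (isOpen_compl_singleton).preimage (((F x).continuous).sub continuous_const)
  have hUmem : ∀ x, x ∈ U x := fun x => hFne x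
  -- countable subcover via σ-compactness
  have hsub : ∀ n : ℕ, ∃ t : Finset K,
      compactCovering K n ⊆ ⋃ x ∈ t, U x := by
    intro n
    apply (isCompact_compactCovering K n).elim_finite_subcover U hUopen
    intro y _
    exact Set.mem_iUnion.2 ⟨y, hUmem y⟩
  choose t ht using hsub
  set P := Σ n : ℕ, {x : K // x ∈ t n} with hP
  have hPcount : Countable P := by infer_instance
  have hPnonempty : Nonempty P := by
    obtain ⟨n, hn⟩ := Set.iUnion_eq_univ_iff.mp (iUnion_compactCovering K) (1 : K)
    have := ht n hn
    obtain ⟨x, hx⟩ := Set.mem_iUnion.1 this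
    obtain ⟨hxt, _⟩ := Set.mem_iUnion.1 hx
    exact ⟨⟨n, ⟨x, hxt⟩⟩⟩
  obtain ⟨e, he⟩ := exists_surjective_nat P
  -- the enumerated functions
  set p : ℕ → K := fun i => (e i).2.1 with hp
  set g : ℕ → (K →ᵇ ℂ) := fun i => F (p i) - (Λ (F (p i))) • 1 with hg
  have hgap : ∀ i, IsAlmostPeriodic ⇑(g i) :=
    fun i => apB_sub (hFap (p i)) (apB_smul _ apB_one)
  have hgzero : ∀ i, Λ (g i) = 0 := by
    intro i
    rw [hg]
    simp only
    rw [hΛ.sub (hFap (p i)) (apB_smul _ apB_one), hΛ.hsmul _ _ apB_one, hΛ.one]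
    ring
  set ρ : ℕ → ℝ := fun i => (1/2)^i / (1 + ‖g i‖^2) with hρ
  have hρpos : ∀ i, 0 < ρ i := by
    intro i
    apply div_pos (by positivity)
    nlinarith [norm_nonneg (g i)]
  set w : ℕ → (K →ᵇ ℂ) := fun i => ((ρ i : ℝ) : ℂ) • (g i * star (g i)) with hw
  have hwap : ∀ i, IsAlmostPeriodic ⇑(w i) :=
    fun i => apB_smul _ (apB_mul (hgap i) (apB_star (hgap i)))
  have hwzero : ∀ i, Λ (w i) = 0 := by
    intro i
    rw [hw]
    simp only
    rw [hΛ.hsmul _ _ (apB_mul (hgap i) (apB_star (hgap i))),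
      hΛ.mul (hgap i) (apB_star (hgap i)), hΛ.conj_eq (hgap i), hgzero i]
    simp
  have hwnorm : ∀ i, ‖w i‖ ≤ (1/2)^i := by
    intro i
    rw [hw]
    simp only
    rw [norm_smul]
    have h1 : ‖g i * star (g i)‖ ≤ ‖g i‖^2 := by
      calc ‖g i * star (g i)‖ ≤ ‖g i‖ * ‖star (g i)‖ := norm_mul_le _ _
        _ = ‖g i‖ * ‖g i‖ := by rw [norm_star]
        _ = ‖g i‖^2 := (sq (‖g i‖)).symm
    have h2 : ‖(((ρ i : ℝ)) : ℂ)‖ = ρ i := by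
      rw [Complex.norm_real, Real.norm_eq_abs, abs_of_pos (hρpos i)]
    rw [h2, hρ]
    simp only
    rw [div_mul_eq_mul_div, div_le_iff₀ (by nlinarith [norm_nonneg (g i)])]
    have hgn : (0:ℝ) ≤ ‖g i‖^2 := by positivity
    have : (1/2:ℝ)^i * ‖g i‖^2 ≤ (1/2)^i * (1 + ‖g i‖^2) := by
      apply mul_le_mul_of_nonneg_left (by linarith) (by positivity)
    calc (1/2:ℝ)^i * ‖g i * star (g i)‖ ≤ (1/2)^i * ‖g i‖^2 := by
          apply mul_le_mul_of_nonneg_left h1 (by positivity)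
      _ ≤ (1/2)^i * (1 + ‖g i‖^2) := this
  have hsummable : Summable w := by
    refine Summable.of_norm_bounded ?_ hwnorm
    exact summable_geometric_two
  set Fsum : K →ᵇ ℂ := ∑' i, w i with hFsum
  have hhassum : HasSum w Fsum := hsummable.hasSum
  have htends : Filter.Tendsto (fun N => ∑ i ∈ Finset.range N, w i)
      Filter.atTop (nhds Fsum) := hhassum.tendsto_sum_nat
  have hdiff : Filter.Tendsto (fun N => ‖Fsum - ∑ i ∈ Finset.range N, w i‖)
      Filter.atTop (nhds 0) := by
    have : Filter.Tendsto (fun N => Fsum - ∑ i ∈ Finset.range N, w i)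
        Filter.atTop (nhds (Fsum - Fsum)) := Filter.Tendsto.sub tendsto_const_nhds htends
    rw [sub_self] at this
    simpa using this.norm
  -- Fsum is almost periodic
  have hFsumap : IsAlmostPeriodic ⇑Fsum := by
    apply ap_of_uniform_approx
    intro ε hε
    have := Filter.Tendsto.eventually_le_const (by linarith : (0:ℝ) < ε) hdiff
    obtain ⟨N, hN⟩ := this.exists
    refine ⟨⇑(∑ i ∈ Finset.range N, w i), apB_sum _ _ (fun i _ => hwap i), ?_⟩
    intro x
    have hb := (Fsum - ∑ i ∈ Finset.range N, w i).norm_coe_le_norm x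
    rw [BoundedContinuousFunction.coe_sub] at hb
    simp only [Pi.sub_apply] at hb
    calc Complex.abs (Fsum x - (∑ i ∈ Finset.range N, w i) x)
        = ‖Fsum x - (∑ i ∈ Finset.range N, w i) x‖ := by rw [Complex.norm_eq_abs]
      _ ≤ ‖Fsum - ∑ i ∈ Finset.range N, w i‖ := hb
      _ ≤ ε := hN
  -- Λ of all the partial sums vanishes
  have hpartial : ∀ N, Λ (∑ i ∈ Finset.range N, w i) = 0 := by
    intro N
    induction N with
    | zero =>
      simp only [Finset.range_zero, Finset.sum_empty]
      have h0 : (0 : K →ᵇ ℂ) = (0 : ℂ) • (1 : K →ᵇ ℂ) := by simp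
      rw [h0, hΛ.hsmul _ _ apB_one]
      simp
    | succ n ih =>
      rw [Finset.sum_range_succ,
        hΛ.hadd _ _ (apB_sum _ _ (fun i _ => hwap i)) (hwap n), ih, hwzero n]
      simp
  -- Λ Fsum = 0
  have hFsumzero : Λ Fsum = 0 := by
    have hub : ∀ N, Complex.abs (Λ Fsum) ≤ C * ‖Fsum - ∑ i ∈ Finset.range N, w i‖ := by
      intro N
      have hsplit : Fsum = (∑ i ∈ Finset.range N, w i) + (Fsum - ∑ i ∈ Finset.range N, w i) := by
        ring
      have hapr : IsAlmostPeriodic ⇑(Fsum - ∑ i ∈ Finset.range N, w i) :=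
        apB_sub hFsumap (apB_sum _ _ (fun i _ => hwap i))
      calc Complex.abs (Λ Fsum)
          = Complex.abs (Λ ((∑ i ∈ Finset.range N, w i) + (Fsum - ∑ i ∈ Finset.range N, w i))) := by
            rw [← hsplit]
        _ = Complex.abs (Λ (∑ i ∈ Finset.range N, w i)
              + Λ (Fsum - ∑ i ∈ Finset.range N, w i)) := by
            rw [hΛ.hadd _ _ (apB_sum _ _ (fun i _ => hwap i)) hapr]
        _ = Complex.abs (Λ (Fsum - ∑ i ∈ Finset.range N, w i)) := by rw [hpartial N, zero_add]
        _ ≤ C * ‖Fsum - ∑ i ∈ Finset.range N, w i‖ := hbd _ hapr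
    have hlim : Filter.Tendsto (fun N => C * ‖Fsum - ∑ i ∈ Finset.range N, w i‖)
        Filter.atTop (nhds 0) := by
      have := hdiff.const_mul C
      simpa using this
    have : Complex.abs (Λ Fsum) ≤ 0 := ge_of_tendsto' hlim hub
    have h0 : Complex.abs (Λ Fsum) = 0 := le_antisymm this (Complex.abs.nonneg _)
    exact Complex.abs.eq_zero.mp h0
  -- get the common zero
  obtain ⟨x₀, hx₀⟩ := hΛ.hmem Fsum hFsumap
  rw [hFsumzero] at hx₀
  -- evaluate the sum pointwise
  have hevals : ∀ i, w i x₀ = ((ρ i * Complex.normSq (g i x₀) : ℝ) : ℂ) := by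
    intro i
    rw [hw]
    simp only [BoundedContinuousFunction.coe_smul, Pi.smul_apply, smul_eq_mul,
      BoundedContinuousFunction.coe_mul, Pi.mul_apply,
      BoundedContinuousFunction.star_apply, Complex.star_def, Complex.mul_conj]
    push_cast
    ring
  have hsum_eval : HasSum (fun i => w i x₀) 0 := by
    have := (BoundedContinuousFunction.evalCLM ℂ x₀).hasSum hhassum
    simpa [BoundedContinuousFunction.evalCLM_apply, hx₀] using this
  have hsum_real : HasSum (fun i => ρ i * Complex.normSq (g i x₀)) 0 := by
    have h1 : HasSum (fun i => ((ρ i * Complex.normSq (g i x₀) : ℝ) : ℂ)) 0 := by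
      rw [show (fun i => ((ρ i * Complex.normSq (g i x₀) : ℝ) : ℂ))
        = (fun i => w i x₀) from funext (fun i => (hevals i).symm)]
      exact hsum_eval
    have h2 := (Complex.hasSum_iff _ _).mp h1
    simpa using h2.1
  have hterms : ∀ i, ρ i * Complex.normSq (g i x₀) = 0 := by
    intro i
    have hnn : ∀ j, 0 ≤ ρ j * Complex.normSq (g j x₀) :=
      fun j => mul_nonneg (le_of_lt (hρpos j)) (Complex.normSq_nonneg _)
    have hle := le_hasSum hsum_real i (fun j _ => hnn j)
    exact le_antisymm hle (hnn i)
  have hgx : ∀ i, g i x₀ = 0 := by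
    intro i
    have := hterms i
    have h2 : Complex.normSq (g i x₀) = 0 := by
      rcases mul_eq_zero.mp this with h | h
      · exact absurd h (ne_of_gt (hρpos i))
      · exact h
    exact Complex.normSq_eq_zero.mp h2
  -- contradiction with the covering
  obtain ⟨n, hn⟩ := Set.iUnion_eq_univ_iff.mp (iUnion_compactCovering K) x₀
  have hx0cov := ht n hn
  obtain ⟨x, hx⟩ := Set.mem_iUnion.1 hx0cov
  obtain ⟨hxt, hxU⟩ := Set.mem_iUnion.1 hx
  obtain ⟨i, hi⟩ := he ⟨n, ⟨x, hxt⟩⟩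
  have hpi : p i = x := by show ((e i).snd : K) = x; rw [hi]
  have : F x x₀ = Λ (F x) := by
    have := hgx i
    rw [hg] at this
    simp only [BoundedContinuousFunction.coe_sub, Pi.sub_apply,
      BoundedContinuousFunction.coe_smul, Pi.smul_apply, smul_eq_mul,
      BoundedContinuousFunction.coe_one, Pi.one_apply, mul_one] at this
    rw [hpi] at this
    exact sub_eq_zero.mp this
  exact hxU this

end APAux

namespace APAux

open BoundedContinuousFunction Complex

lemma unitary_entry_le {n : ℕ} {A : Matrix (Fin n) (Fin n) ℂ}
    (hA : A ∈ Matrix.unitaryGroup (Fin n) ℂ) (j k : Fin n) : Complex.abs (A j k) ≤ 1 := by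
  have h1 : A * star A = 1 := (Matrix.mem_unitaryGroup_iff.mp hA)
  have h2 : (A * star A) j j = 1 := by rw [h1]; simp [Matrix.one_apply]
  rw [Matrix.mul_apply] at h2
  have e : ∀ p, A j p * (star A) p j = ((Complex.normSq (A j p) : ℝ) : ℂ) := by
    intro p
    rw [Matrix.star_apply, Complex.star_def, Complex.mul_conj]
  rw [Finset.sum_congr rfl (fun p _ => e p)] at h2
  rw [← Complex.ofReal_sum] at h2
  have h3 : ∑ p, Complex.normSq (A j p) = 1 := by exact_mod_cast h2
  have h4 : Complex.normSq (A j k) ≤ 1 := by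
    rw [← h3]
    exact Finset.single_le_sum (f := fun p => Complex.normSq (A j p))
      (fun p _ => Complex.normSq_nonneg _) (Finset.mem_univ k)
  rw [Complex.abs_apply]
  calc Real.sqrt (Complex.normSq (A j k)) ≤ Real.sqrt 1 := Real.sqrt_le_sqrt h4
    _ = 1 := Real.sqrt_one

variable {G : Type*} [Group G] [TopologicalSpace G]

/-- matrix coefficients of unitary representations are almost periodic -/
lemma ap_coeff {n : ℕ} {D : G → Matrix (Fin n) (Fin n) ℂ}
    (hU : ∀ g, D g ∈ Matrix.unitaryGroup (Fin n) ℂ)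
    (hM : ∀ a b : G, D (a * b) = D a * D b) (j k : Fin n) :
    IsAlmostPeriodic (fun g => D g j k) := by
  classical
  apply isAP_of_finite
  intro ε hε
  set δ : ℝ := ε / ((n : ℝ)^2 + 1) with hδ
  have hδpos : 0 < δ := by positivity
  -- finitely many balls of radius δ/2 covering the closed unit ball
  obtain ⟨cs, hcs⟩ := (isCompact_closedBall (0 : ℂ) 1).elim_finite_subcover
    (fun c : ℂ => Metric.ball c (δ/2)) (fun c => Metric.isOpen_ball)
    (fun z hz => Set.mem_iUnion.2 ⟨z, Metric.mem_ball_self (by positivity)⟩)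
  refine ⟨(Fin n × Fin n) → {c // c ∈ cs}, inferInstance, ?_, ?_, ?_⟩
  · exact fun φ => {g | ∀ jk : Fin n × Fin n,
      D g jk.1 jk.2 ∈ Metric.ball (φ jk : ℂ) (δ/2)}
  · apply Set.eq_univ_of_forall
    intro g
    have hmem : ∀ jk : Fin n × Fin n, ∃ c : {c // c ∈ cs},
        D g jk.1 jk.2 ∈ Metric.ball (c : ℂ) (δ/2) := by
      intro jk
      have h1 : D g jk.1 jk.2 ∈ Metric.closedBall (0 : ℂ) 1 := by
        rw [Metric.mem_closedBall, Complex.dist_eq]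
        simpa [Complex.norm_eq_abs] using unitary_entry_le (hU g) jk.1 jk.2
      have h2 := hcs h1
      obtain ⟨c, hc⟩ := Set.mem_iUnion.1 h2
      obtain ⟨hct, hcb⟩ := Set.mem_iUnion.1 hc
      exact ⟨⟨c, hct⟩, hcb⟩
    choose φ hφ using hmem
    exact Set.mem_iUnion.2 ⟨φ, hφ⟩
  · intro φ z w x y hx hy
    -- all entries of `D x` and `D y` are δ-close
    have hclose : ∀ p q : Fin n, Complex.abs (D x p q - D y p q) ≤ δ := by
      intro p q
      have h1 := hx (p, q)
      have h2 := hy (p, q)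
      rw [Metric.mem_ball] at h1 h2
      rw [dist_comm] at h2
      have : dist (D x p q) (D y p q) < δ := by
        calc dist (D x p q) (D y p q)
            ≤ dist (D x p q) (φ (p, q) : ℂ) + dist ((φ (p, q) : ℂ)) (D y p q) :=
              dist_triangle _ _ _
          _ < δ/2 + δ/2 := add_lt_add h1 h2
          _ = δ := add_halves δ
      rw [Complex.dist_eq] at this
      exact le_of_lt this
    -- expand the triple product
    have hexp : ∀ a : G, D (z * a * w) j k
        = ∑ q, ∑ p, D z j p * D a p q * D w q k := by
      intro a
      rw [hM, hM, Matrix.mul_apply]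
      apply Finset.sum_congr rfl
      intro q _
      rw [Matrix.mul_apply, Finset.sum_mul]
    rw [hexp x, hexp y]
    rw [← Finset.sum_sub_distrib]
    have hsummand : ∀ q : Fin n,
        Complex.abs ((∑ p, D z j p * D x p q * D w q k)
          - ∑ p, D z j p * D y p q * D w q k) ≤ (n : ℝ) * δ := by
      intro q
      rw [← Finset.sum_sub_distrib]
      calc Complex.abs (∑ p, (D z j p * D x p q * D w q k - D z j p * D y p q * D w q k))
          ≤ ∑ p, Complex.abs (D z j p * D x p q * D w q k - D z j p * D y p q * D w q k) :=
            Complex.abs.sum_le _ _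
        _ ≤ ∑ _p : Fin n, δ := by
            apply Finset.sum_le_sum
            intro p _
            have heq : D z j p * D x p q * D w q k - D z j p * D y p q * D w q k
                = D z j p * (D x p q - D y p q) * D w q k := by ring
            rw [heq, map_mul, map_mul]
            have hb1 := unitary_entry_le (hU z) j p
            have hb2 := hclose p q
            have hb3 := unitary_entry_le (hU w) q k
            have h12 : Complex.abs (D z j p) * Complex.abs (D x p q - D y p q) ≤ 1 * δ :=
              mul_le_mul hb1 hb2 (Complex.abs.nonneg _) zero_le_one
            calc Complex.abs (D z j p) * Complex.abs (D x p q - D y p q)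
                  * Complex.abs (D w q k)
                ≤ (1 * δ) * 1 :=
                  mul_le_mul h12 hb3 (Complex.abs.nonneg _)
                    (mul_nonneg zero_le_one (le_of_lt hδpos))
              _ = δ := by ring
        _ = (n : ℝ) * δ := by simp [Finset.sum_const, mul_comm]
    calc Complex.abs (∑ q, ((∑ p, D z j p * D x p q * D w q k)
            - ∑ p, D z j p * D y p q * D w q k))
        ≤ ∑ q, Complex.abs ((∑ p, D z j p * D x p q * D w q k)
            - ∑ p, D z j p * D y p q * D w q k) := Complex.abs.sum_le _ _
      _ ≤ ∑ _q : Fin n, (n : ℝ) * δ := Finset.sum_le_sum (fun q _ => hsummand q)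
      _ = (n : ℝ)^2 * δ := by
          simp [Finset.sum_const]
          ring
      _ < ε := by
          rw [hδ]
          rw [div_eq_mul_inv, ← mul_assoc]
          rw [show (n : ℝ)^2 * ε * ((n : ℝ)^2 + 1)⁻¹ = ε * ((n : ℝ)^2 / ((n : ℝ)^2 + 1)) by
            rw [div_eq_mul_inv]; ring]
          have hlt : (n : ℝ)^2 / ((n : ℝ)^2 + 1) < 1 := by
            rw [div_lt_one (by positivity)]
            linarith
          nlinarith

/-- a bounded continuous function from a coefficient -/
def coeffB {n : ℕ} (D : G → Matrix (Fin n) (Fin n) ℂ) (hcont : Continuous D)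
    (hU : ∀ g, D g ∈ Matrix.unitaryGroup (Fin n) ℂ) (j k : Fin n) : G →ᵇ ℂ :=
  BoundedContinuousFunction.ofNormedAddCommGroup (fun g => D g j k)
    ((continuous_apply k).comp ((continuous_apply j).comp hcont)) 1
    (fun g => by simpa [Complex.norm_eq_abs] using unitary_entry_le (hU g) j k)

@[simp] lemma coeffB_apply {n : ℕ} (D : G → Matrix (Fin n) (Fin n) ℂ) (hcont : Continuous D)
    (hU : ∀ g, D g ∈ Matrix.unitaryGroup (Fin n) ℂ) (j k : Fin n) (g : G) :
    coeffB D hcont hU j k g = D g j k := rfl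

/-- almost periodic functions separate the points of a MAP group -/
lemma ap_separates (hG : MAPGroup G) {x y : G} (hxy : x ≠ y) :
    ∃ f : G →ᵇ ℂ, IsAlmostPeriodic ⇑f ∧ f x ≠ f y := by
  obtain ⟨n, D, ⟨hcont, hU, hM⟩, hne⟩ := hG hxy
  have : ∃ j k : Fin n, D x j k ≠ D y j k := by
    by_contra hcon
    push_neg at hcon
    apply hne
    ext j k
    exact hcon j k
  obtain ⟨j, k, hjk⟩ := this
  exact ⟨coeffB D hcont hU j k, ap_coeff hU hM j k, hjk⟩

end APAux

namespace APAux

open BoundedContinuousFunction Complex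

lemma one_dim_unitary_abs {A : Matrix (Fin 1) (Fin 1) ℂ}
    (hA : A ∈ Matrix.unitaryGroup (Fin 1) ℂ) : Complex.abs (A 0 0) = 1 := by
  have h1 : A * star A = 1 := Matrix.mem_unitaryGroup_iff.mp hA
  have h2 : (A * star A) 0 0 = 1 := by rw [h1]; simp [Matrix.one_apply]
  rw [Matrix.mul_apply, Fin.sum_univ_one, Matrix.star_apply, Complex.star_def,
    Complex.mul_conj] at h2
  have h3 : Complex.normSq (A 0 0) = 1 := by exact_mod_cast h2
  rw [Complex.abs_apply, h3, Real.sqrt_one]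

variable {G H : Type*} [Group G] [TopologicalSpace G] [Group H] [TopologicalSpace H]

/-- `T 1` has unimodular values and is multiplicative. -/
lemma gamma_facts (T : (G →ᵇ ℂ) → (H →ᵇ ℂ)) (hTrep : RespectsUnitaryRepsB T) :
    (∀ h : H, Complex.abs (T 1 h) = 1) ∧
      (∀ a b : H, T 1 (a * b) = T 1 a * T 1 b) := by
  set d : Matrix (Fin 1) (Fin 1) (G →ᵇ ℂ) := fun _ _ => 1 with hd
  have key : ∀ g : G, (Matrix.of fun j k => d j k g) = (1 : Matrix (Fin 1) (Fin 1) ℂ) := by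
    intro g
    ext j k
    have hjk : j = k := Subsingleton.elim j k
    subst hjk
    simp [hd, Matrix.one_apply]
  have h1 : ∀ g : G, (Matrix.of fun j k => d j k g) ∈ Matrix.unitaryGroup (Fin 1) ℂ := by
    intro g
    rw [key g]
    exact one_mem _
  have h2 : ∀ a b : G, (Matrix.of fun j k => d j k (a * b)) =
      (Matrix.of fun j k => d j k a) * (Matrix.of fun j k => d j k b) := by
    intro a b
    rw [key, key, key, one_mul]
  obtain ⟨hu, hm⟩ := hTrep 1 d h1 h2
  constructor
  · intro h
    have := hu h
    have habs := one_dim_unitary_abs this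
    simpa [hd] using habs
  · intro a b
    have := hm a b
    have h00 := congrFun (congrFun this 0) 0
    rw [Matrix.mul_apply, Fin.sum_univ_one] at h00
    simpa [hd] using h00

/-- transfer of a unitary representation along `T` -/
lemma rep_transfer (T : (G →ᵇ ℂ) → (H →ᵇ ℂ)) (hTrep : RespectsUnitaryRepsB T)
    {n : ℕ} {D : G → Matrix (Fin n) (Fin n) ℂ} (hD : IsUnitaryRep n D) :
    (∀ h : H, (Matrix.of fun j k => T (coeffB D hD.1 hD.2.1 j k) h)
        ∈ Matrix.unitaryGroup (Fin n) ℂ) ∧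
      (∀ a b : H, (Matrix.of fun j k => T (coeffB D hD.1 hD.2.1 j k) (a * b)) =
        (Matrix.of fun j k => T (coeffB D hD.1 hD.2.1 j k) a) *
          (Matrix.of fun j k => T (coeffB D hD.1 hD.2.1 j k) b)) := by
  apply hTrep n (fun j k => coeffB D hD.1 hD.2.1 j k)
  · intro g
    have : (Matrix.of fun j k => coeffB D hD.1 hD.2.1 j k g) = D g := by
      ext j k
      rfl
    rw [this]
    exact hD.2.1 g
  · intro a b
    have e : ∀ c : G, (Matrix.of fun j k => coeffB D hD.1 hD.2.1 j k c) = D c := by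
      intro c
      ext j k
      rfl
    rw [e, e, e]
    exact hD.2.2 a b

end APAux


open APAux BoundedContinuousFunction Complex in
/-- Let `G`, `H` be σ-compact maximally almost periodic locally compact Hausdorff groups and
suppose `T` is a non-vanishing linear isometry of `AP(G)` *onto* `AP(H)` respecting
finite-dimensional unitary representations. Then there are a topological group isomorphism
`t : H → G` and a continuous character `γ` of `H` with `(T f) h = γ h * f (t h)` for all
`h ∈ H` and all `f ∈ AP(G)`. -/
theorem ap_onto_isometry_induces_isomorphism
    {G H : Type u} [Group G] [TopologicalSpace G] [IsTopologicalGroup G]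
    [LocallyCompactSpace G] [T2Space G] [SigmaCompactSpace G]
    [Group H] [TopologicalSpace H] [IsTopologicalGroup H]
    [LocallyCompactSpace H] [T2Space H] [SigmaCompactSpace H]
    (hGmap : MAPGroup G) (hHmap : MAPGroup H)
    (T : (G →ᵇ ℂ) → (H →ᵇ ℂ))
    (hTap : ∀ f : G →ᵇ ℂ, IsAlmostPeriodic ⇑f → IsAlmostPeriodic ⇑(T f))
    (hTadd : ∀ f g : G →ᵇ ℂ, IsAlmostPeriodic ⇑f → IsAlmostPeriodic ⇑g →
      T (f + g) = T f + T g)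
    (hTsmul : ∀ (c : ℂ) (f : G →ᵇ ℂ), IsAlmostPeriodic ⇑f → T (c • f) = c • T f)
    (hTiso : ∀ f : G →ᵇ ℂ, IsAlmostPeriodic ⇑f → ‖T f‖ = ‖f‖)
    (hTnv : ∀ f : G →ᵇ ℂ, IsAlmostPeriodic ⇑f →
      ((∀ y : H, T f y ≠ 0) ↔ ∀ x : G, f x ≠ 0))
    (hTrep : RespectsUnitaryRepsB T)
    (hTonto : ∀ g : H →ᵇ ℂ, IsAlmostPeriodic ⇑g →
      ∃ f : G →ᵇ ℂ, IsAlmostPeriodic ⇑f ∧ T f = g) :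
    ∃ t : H ≃ₜ G, (∀ a b : H, t (a * b) = t a * t b) ∧
      ∃ γ : H → ℂ, IsCharacter γ ∧
        ∀ f : G →ᵇ ℂ, IsAlmostPeriodic ⇑f →
          ∀ h : H, T f h = γ h * f (t h) := by
  classical
  obtain ⟨hγabs, hγmul⟩ := gamma_facts T hTrep
  have hγne : ∀ h : H, T 1 h ≠ 0 := by
    intro h h0
    have := hγabs h
    rw [h0] at this
    simp at this
  -- the point functionals on the G side
  set Lam : H → (G →ᵇ ℂ) → ℂ := fun h f => (T 1 h)⁻¹ * T f h with hLam
  have hgood : ∀ h : H, IsGood (Lam h) := by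
    intro h
    refine ⟨?_, ?_, ?_⟩
    · intro f g hf hg
      simp only [hLam]
      rw [hTadd f g hf hg]
      simp only [BoundedContinuousFunction.coe_add, Pi.add_apply]
      ring
    · intro c f hf
      simp only [hLam]
      rw [hTsmul c f hf]
      simp only [BoundedContinuousFunction.coe_smul, Pi.smul_apply, smul_eq_mul]
      ring
    · intro f hf
      by_contra hcon
      push_neg at hcon
      set c : ℂ := (T 1 h)⁻¹ * T f h with hc
      have hwap : IsAlmostPeriodic ⇑(f - c • 1) := apB_sub hf (apB_smul _ apB_one)
      have hnz : ∀ x : G, (f - c • 1) x ≠ 0 := by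
        intro x
        simp only [BoundedContinuousFunction.coe_sub, Pi.sub_apply,
          BoundedContinuousFunction.coe_smul, Pi.smul_apply, smul_eq_mul,
          BoundedContinuousFunction.coe_one, Pi.one_apply, mul_one]
        exact sub_ne_zero.mpr (hcon x)
      have h2 := (hTnv _ hwap).mpr hnz h
      apply h2
      have hsplit : f - c • 1 = f + (-c) • 1 := by
        ext x
        simp [sub_eq_add_neg]
      rw [hsplit, hTadd f ((-c) • 1) hf (apB_smul _ apB_one), hTsmul (-c) 1 apB_one]
      simp only [BoundedContinuousFunction.coe_add, Pi.add_apply,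
        BoundedContinuousFunction.coe_smul, Pi.smul_apply, smul_eq_mul]
      rw [hc, neg_mul, mul_comm (((T 1) h)⁻¹) ((T f) h), mul_assoc,
        inv_mul_cancel₀ (hγne h), mul_one]
      ring
  have hbd : ∀ h : H, ∀ f : G →ᵇ ℂ, IsAlmostPeriodic ⇑f →
      Complex.abs (Lam h f) ≤ 1 * ‖f‖ := by
    intro h f hf
    simp only [hLam]
    rw [map_mul, map_inv₀, hγabs h, inv_one, one_mul, one_mul]
    calc Complex.abs (T f h) = ‖T f h‖ := by rw [Complex.norm_eq_abs]
      _ ≤ ‖T f‖ := (T f).norm_coe_le_norm h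
      _ = ‖f‖ := hTiso f hf
  have hpoint : ∀ h : H, ∃ x : G, ∀ f : G →ᵇ ℂ, IsAlmostPeriodic ⇑f → f x = Lam h f :=
    fun h => (hgood h).exists_point 1 (hbd h)
  choose t0 ht0 using hpoint
  have hform : ∀ f : G →ᵇ ℂ, IsAlmostPeriodic ⇑f → ∀ h : H,
      T f h = T 1 h * f (t0 h) := by
    intro f hf h
    rw [ht0 h f hf]
    simp only [hLam]
    rw [← mul_assoc, mul_inv_cancel₀ (hγne h), one_mul]
  -- injectivity of T on almost periodic functions
  have hTinj : ∀ f f' : G →ᵇ ℂ, IsAlmostPeriodic ⇑f → IsAlmostPeriodic ⇑f' →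
      T f = T f' → f = f' := by
    intro f f' hf hf' heq
    have hd : IsAlmostPeriodic ⇑(f - f') := apB_sub hf hf'
    have hsplit : f = f' + (f - f') := by ring
    have : T f = T f' + T (f - f') := by
      conv_lhs => rw [hsplit]
      exact hTadd f' (f - f') hf' hd
    have hz : T (f - f') = 0 := by
      rw [heq] at this
      exact (left_eq_add.mp this)
    have : ‖f - f'‖ = 0 := by rw [← hTiso _ hd, hz, norm_zero]
    have := norm_eq_zero.mp this
    exact sub_eq_zero.mp this
  -- the inverse map
  set T' : (H →ᵇ ℂ) → (G →ᵇ ℂ) :=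
    fun g => if hg : IsAlmostPeriodic ⇑g then (hTonto g hg).choose else 0 with hT'
  have hT'spec : ∀ g : H →ᵇ ℂ, (hg : IsAlmostPeriodic ⇑g) →
      IsAlmostPeriodic ⇑(T' g) ∧ T (T' g) = g := by
    intro g hg
    simp only [hT', dif_pos hg]
    exact (hTonto g hg).choose_spec
  have hT'add : ∀ g g' : H →ᵇ ℂ, IsAlmostPeriodic ⇑g → IsAlmostPeriodic ⇑g' →
      T' (g + g') = T' g + T' g' := by
    intro g g' hg hg'
    have h1 := hT'spec (g + g') (apB_add hg hg')
    have h2 := hT'spec g hg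
    have h3 := hT'spec g' hg'
    apply hTinj _ _ h1.1 (apB_add h2.1 h3.1)
    rw [h1.2, hTadd _ _ h2.1 h3.1, h2.2, h3.2]
  have hT'smul : ∀ (c : ℂ) (g : H →ᵇ ℂ), IsAlmostPeriodic ⇑g →
      T' (c • g) = c • T' g := by
    intro c g hg
    have h1 := hT'spec (c • g) (apB_smul c hg)
    have h2 := hT'spec g hg
    apply hTinj _ _ h1.1 (apB_smul c h2.1)
    rw [h1.2, hTsmul c _ h2.1, h2.2]
  have hT'iso : ∀ g : H →ᵇ ℂ, IsAlmostPeriodic ⇑g → ‖T' g‖ = ‖g‖ := by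
    intro g hg
    have h2 := hT'spec g hg
    conv_rhs => rw [← h2.2]
    exact (hTiso _ h2.1).symm
  have hT'nv : ∀ g : H →ᵇ ℂ, IsAlmostPeriodic ⇑g →
      ((∀ x : G, T' g x ≠ 0) ↔ ∀ y : H, g y ≠ 0) := by
    intro g hg
    have h2 := hT'spec g hg
    have := hTnv (T' g) h2.1
    rw [h2.2] at this
    exact this.symm
  have hTT' : ∀ f : G →ᵇ ℂ, IsAlmostPeriodic ⇑f → T' (T f) = f := by
    intro f hf
    have h1 := hT'spec (T f) (hTap f hf)
    exact hTinj _ _ h1.1 hf h1.2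
  -- δ = T' 1 never vanishes
  have hδap : IsAlmostPeriodic ⇑(T' 1) := (hT'spec 1 apB_one).1
  have hδne : ∀ x : G, T' 1 x ≠ 0 := by
    apply (hT'nv 1 apB_one).mpr
    intro y
    simp
  -- the point functionals on the H side
  set Lam' : G → (H →ᵇ ℂ) → ℂ := fun x g => (T' 1 x)⁻¹ * T' g x with hLam'
  have hgood' : ∀ x : G, IsGood (Lam' x) := by
    intro x
    refine ⟨?_, ?_, ?_⟩
    · intro g g' hg hg'
      simp only [hLam']
      rw [hT'add g g' hg hg']
      simp only [BoundedContinuousFunction.coe_add, Pi.add_apply]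
      ring
    · intro c g hg
      simp only [hLam']
      rw [hT'smul c g hg]
      simp only [BoundedContinuousFunction.coe_smul, Pi.smul_apply, smul_eq_mul]
      ring
    · intro g hg
      by_contra hcon
      push_neg at hcon
      set c : ℂ := (T' 1 x)⁻¹ * T' g x with hc
      have hwap : IsAlmostPeriodic ⇑(g - c • 1) := apB_sub hg (apB_smul _ apB_one)
      have hnz : ∀ y : H, (g - c • 1) y ≠ 0 := by
        intro y
        simp only [BoundedContinuousFunction.coe_sub, Pi.sub_apply,
          BoundedContinuousFunction.coe_smul, Pi.smul_apply, smul_eq_mul,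
          BoundedContinuousFunction.coe_one, Pi.one_apply, mul_one]
        exact sub_ne_zero.mpr (hcon y)
      have h2 := (hT'nv _ hwap).mpr hnz x
      apply h2
      have hsplit : g - c • 1 = g + (-c) • 1 := by
        ext y
        simp [sub_eq_add_neg]
      rw [hsplit, hT'add g ((-c) • 1) hg (apB_smul _ apB_one), hT'smul (-c) 1 apB_one]
      simp only [BoundedContinuousFunction.coe_add, Pi.add_apply,
        BoundedContinuousFunction.coe_smul, Pi.smul_apply, smul_eq_mul]
      rw [hc, neg_mul, mul_comm (((T' 1) x)⁻¹) ((T' g) x), mul_assoc,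
        inv_mul_cancel₀ (hδne x), mul_one]
      ring
  have hbd' : ∀ x : G, ∀ g : H →ᵇ ℂ, IsAlmostPeriodic ⇑g →
      Complex.abs (Lam' x g) ≤ (Complex.abs (T' 1 x))⁻¹ * ‖g‖ := by
    intro x g hg
    simp only [hLam']
    rw [map_mul, map_inv₀]
    apply mul_le_mul_of_nonneg_left _ (by positivity)
    calc Complex.abs (T' g x) = ‖T' g x‖ := by rw [Complex.norm_eq_abs]
      _ ≤ ‖T' g‖ := (T' g).norm_coe_le_norm x
      _ = ‖g‖ := hT'iso g hg
  have hpoint' : ∀ x : G, ∃ y : H, ∀ g : H →ᵇ ℂ, IsAlmostPeriodic ⇑g → g y = Lam' x g :=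
    fun x => (hgood' x).exists_point _ (hbd' x)
  choose s0 hs0 using hpoint'
  have hform' : ∀ g : H →ᵇ ℂ, IsAlmostPeriodic ⇑g → ∀ x : G,
      T' g x = T' 1 x * g (s0 x) := by
    intro g hg x
    rw [hs0 x g hg]
    simp only [hLam']
    rw [← mul_assoc, mul_inv_cancel₀ (hδne x), one_mul]
  -- two-sided inverse
  have hst : ∀ x : G, t0 (s0 x) = x := by
    intro x
    have h1 : ∀ f : G →ᵇ ℂ, IsAlmostPeriodic ⇑f →
        f x = T' 1 x * (T 1 (s0 x) * f (t0 (s0 x))) := by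
      intro f hf
      conv_lhs => rw [← hTT' f hf]
      rw [hform' (T f) (hTap f hf) x, hform f hf (s0 x)]
    have h2 : T' 1 x * T 1 (s0 x) = 1 := by
      have := h1 1 apB_one
      simp only [BoundedContinuousFunction.coe_one, Pi.one_apply, mul_one] at this
      exact this.symm
    have h3 : ∀ f : G →ᵇ ℂ, IsAlmostPeriodic ⇑f → f x = f (t0 (s0 x)) := by
      intro f hf
      have := h1 f hf
      rwa [← mul_assoc, h2, one_mul] at this
    by_contra hne
    obtain ⟨f, hf, hfne⟩ := ap_separates hGmap hne
    exact hfne (h3 f hf).symm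
  have hts : ∀ h : H, s0 (t0 h) = h := by
    intro h
    have h1 : ∀ g : H →ᵇ ℂ, IsAlmostPeriodic ⇑g →
        g h = T 1 h * (T' 1 (t0 h) * g (s0 (t0 h))) := by
      intro g hg
      conv_lhs => rw [← (hT'spec g hg).2]
      rw [hform (T' g) (hT'spec g hg).1 h, hform' g hg (t0 h)]
    have h2 : T 1 h * T' 1 (t0 h) = 1 := by
      have := h1 1 apB_one
      simp only [BoundedContinuousFunction.coe_one, Pi.one_apply, mul_one] at this
      exact this.symm
    have h3 : ∀ g : H →ᵇ ℂ, IsAlmostPeriodic ⇑g → g h = g (s0 (t0 h)) := by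
      intro g hg
      have := h1 g hg
      rwa [← mul_assoc, h2, one_mul] at this
    by_contra hne
    obtain ⟨g, hg, hgne⟩ := ap_separates hHmap hne
    exact hgne (h3 g hg).symm
  -- multiplicativity of t0
  have htmul : ∀ a b : H, t0 (a * b) = t0 a * t0 b := by
    intro a b
    by_contra hne
    obtain ⟨n, D, hD, hDne⟩ := hGmap hne
    obtain ⟨hu', hm'⟩ := rep_transfer T hTrep hD
    apply hDne
    ext j k
    have hcoefap : ∀ j k : Fin n, IsAlmostPeriodic ⇑(coeffB D hD.1 hD.2.1 j k) :=
      fun j k => ap_coeff hD.2.1 hD.2.2 j k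
    have hTc : ∀ (j k : Fin n) (h : H),
        T (coeffB D hD.1 hD.2.1 j k) h = T 1 h * D (t0 h) j k := by
      intro j k h
      rw [hform _ (hcoefap j k) h]
      rfl
    have hjk := congrFun (congrFun (hm' a b) j) k
    rw [Matrix.mul_apply] at hjk
    simp only [Matrix.of_apply] at hjk
    simp only [hTc] at hjk
    have hR : ∑ p, T 1 a * D (t0 a) j p * (T 1 b * D (t0 b) p k)
        = T 1 a * T 1 b * ∑ p, D (t0 a) j p * D (t0 b) p k := by
      rw [Finset.mul_sum]
      apply Finset.sum_congr rfl
      intro p _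
      ring
    rw [hR] at hjk
    rw [hγmul a b] at hjk
    have hcancel := mul_left_cancel₀ (mul_ne_zero (hγne a) (hγne b)) hjk
    rw [hcancel, hD.2.2]
    rw [Matrix.mul_apply]
  have ht1 : t0 1 = 1 := by
    have := htmul 1 1
    rw [mul_one] at this
    exact (left_eq_mul.mp this)
  have htinv : ∀ a : H, t0 a⁻¹ = (t0 a)⁻¹ := by
    intro a
    have := htmul a⁻¹ a
    rw [inv_mul_cancel, ht1] at this
    exact eq_inv_of_mul_eq_one_left this.symm
  -- the graph subgroup
  set Γ : Subgroup (H × G) :=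
    { carrier := {p : H × G | p.2 = t0 p.1}
      one_mem' := ht1.symm
      mul_mem' := by
        rintro ⟨a, x⟩ ⟨b, y⟩ ha hb
        have ha' : x = t0 a := ha
        have hb' : y = t0 b := hb
        show x * y = t0 (a * b)
        rw [htmul a b, ha', hb']
      inv_mem' := by
        rintro ⟨a, x⟩ ha
        have ha' : x = t0 a := ha
        show x⁻¹ = t0 a⁻¹
        rw [htinv a, ha'] } with hΓ
  have hΓmem : ∀ p : H × G, p ∈ Γ ↔ p.2 = t0 p.1 := fun p => Iff.rfl
  have hΓclosed : IsClosed (Γ : Set (H × G)) := by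
    have heq : (Γ : Set (H × G)) = ⋂ (f : {f : G →ᵇ ℂ // IsAlmostPeriodic ⇑f}),
        {p : H × G | T f.1 p.1 = T 1 p.1 * f.1 p.2} := by
      ext p
      constructor
      · intro hp
        simp only [Set.mem_iInter]
        intro f
        have hp2 : p.2 = t0 p.1 := hp
        rw [Set.mem_setOf_eq, hp2]
        exact hform f.1 f.2 p.1
      · intro hp
        simp only [Set.mem_iInter] at hp
        show p.2 = t0 p.1
        by_contra hne
        obtain ⟨f, hf, hfne⟩ := ap_separates hGmap hne
        have h1 := hp ⟨f, hf⟩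
        rw [Set.mem_setOf_eq, hform f hf p.1] at h1
        exact hfne (mul_left_cancel₀ (hγne p.1) h1).symm
    rw [heq]
    apply isClosed_iInter
    intro f
    apply isClosed_eq
    · exact (T f.1).continuous.comp continuous_fst
    · exact ((T 1).continuous.comp continuous_fst).mul (f.1.continuous.comp continuous_snd)
  haveI hsc : SigmaCompactSpace ↥Γ := hΓclosed.sigmaCompactSpace
  -- projections are open maps
  set φ1 : ↥Γ →* H := (MonoidHom.fst H G).comp Γ.subtype with hφ1
  have hφ1cont : Continuous φ1 := continuous_fst.comp continuous_subtype_val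
  have hφ1surj : Function.Surjective φ1 := fun h => ⟨⟨(h, t0 h), rfl⟩, rfl⟩
  have hopen1 := MonoidHom.isOpenMap_of_sigmaCompact φ1 hφ1surj hφ1cont
  set φ2 : ↥Γ →* G := (MonoidHom.snd H G).comp Γ.subtype with hφ2
  have hφ2cont : Continuous φ2 := continuous_snd.comp continuous_subtype_val
  have hφ2surj : Function.Surjective φ2 := fun x => ⟨⟨(s0 x, x), (hst x).symm⟩, rfl⟩
  have hopen2 := MonoidHom.isOpenMap_of_sigmaCompact φ2 hφ2surj hφ2cont
  have hcont_t : Continuous t0 := by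
    rw [continuous_def]
    intro U hU
    have himg : t0 ⁻¹' U = φ1 '' {p : ↥Γ | ((p : H × G)).2 ∈ U} := by
      ext h
      constructor
      · intro hh
        exact ⟨⟨(h, t0 h), rfl⟩, hh, rfl⟩
      · rintro ⟨p, hp, rfl⟩
        have hp2 : ((p : H × G)).2 = t0 ((p : H × G)).1 := p.2
        show t0 ((p : H × G)).1 ∈ U
        rw [← hp2]
        exact hp
    rw [himg]
    exact hopen1 _ (((continuous_snd.comp continuous_subtype_val)).isOpen_preimage U hU)
  have hcont_s : Continuous s0 := by
    rw [continuous_def]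
    intro V hV
    have himg : s0 ⁻¹' V = φ2 '' {p : ↥Γ | ((p : H × G)).1 ∈ V} := by
      ext x
      constructor
      · intro hx
        exact ⟨⟨(s0 x, x), (hst x).symm⟩, hx, rfl⟩
      · rintro ⟨p, hp, rfl⟩
        have hp2 : ((p : H × G)).2 = t0 ((p : H × G)).1 := p.2
        show s0 ((p : H × G)).2 ∈ V
        rw [hp2, hts]
        exact hp
    rw [himg]
    exact hopen2 _ (((continuous_fst.comp continuous_subtype_val)).isOpen_preimage V hV)
  -- assemble
  refine ⟨⟨⟨t0, s0, hts, hst⟩, hcont_t, hcont_s⟩, htmul, ⇑(T 1),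
    ⟨(T 1).continuous, hγabs, hγmul⟩, fun f hf h => hform f hf h⟩


end
end

section
/- Let τ₁ and τ₂ be two group topologies on a group G, each making G a maximally almost periodic locally compact Hausdorff group that respects compactness. If AP(G, τ₁) = AP(G, τ₂), then τ₁ = τ₂. -/
open scoped BoundedContinuousFunction

noncomputable section

universe u
/-- The set of almost periodic functions of `(G, τ)`: the τ-continuous functions satisfying the
almost periodicity condition. -/
def APSet (G : Type*) [Group G] (τ : TopologicalSpace G) : Set (G → ℂ) :=
  {f : G → ℂ | IsAlmostPeriodic f ∧ @Continuous G ℂ τ _ f}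


section AuxProofs

open Metric in
/-- Entries of a finite-dimensional unitary representation are almost periodic. -/
lemma aux_entry_ap {G : Type*} [Group G] {n : ℕ}
    (D : G → Matrix (Fin n) (Fin n) ℂ)
    (hu : ∀ g, D g ∈ Matrix.unitaryGroup (Fin n) ℂ)
    (hm : ∀ a b : G, D (a * b) = D a * D b) (j k : Fin n) :
    IsAlmostPeriodic (fun g => D g j k) := by
  intro ε hε
  have hn1 : (0:ℝ) < (n:ℝ)^2 + 1 := by positivity
  set δ : ℝ := ε / (2 * ((n:ℝ)^2 + 1)) with hδdef
  have hδ : 0 < δ := by positivity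
  set E : G → (Fin n × Fin n → ℂ) := fun g p => D g p.1 p.2 with hE
  have hEK : ∀ g, E g ∈ closedBall (0 : Fin n × Fin n → ℂ) 1 := by
    intro g
    rw [mem_closedBall, dist_pi_le_iff zero_le_one]
    intro p
    simpa [hE, dist_eq_norm] using entry_norm_bound_of_unitary (hu g) p.1 p.2
  have hK : IsCompact (closedBall (0 : Fin n × Fin n → ℂ) 1) := isCompact_closedBall _ _
  obtain ⟨t, -, htfin, htcover⟩ := hK.finite_cover_balls hδ
  obtain ⟨m, emb, hemb⟩ := htfin.fin_embedding
  refine ⟨m, fun i => E ⁻¹' ball (emb i) δ, ?_, ?_⟩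
  · ext g
    simp only [Set.mem_iUnion, Set.mem_univ, iff_true, Set.mem_preimage]
    have hg := htcover (hEK g)
    rw [Set.mem_iUnion₂] at hg
    obtain ⟨y, hyt, hy⟩ := hg
    rw [← hemb] at hyt
    obtain ⟨i, rfl⟩ := hyt
    exact ⟨i, hy⟩
  · intro i z w x y hx hy
    simp only [Set.mem_preimage] at hx hy
    have hxy : ∀ l m', ‖D x l m' - D y l m'‖ ≤ 2 * δ := by
      intro l m'
      have h1 : dist (E x) (E y) < 2 * δ := by
        calc dist (E x) (E y) ≤ dist (E x) (emb i) + dist (emb i) (E y) := dist_triangle _ _ _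
          _ < δ + δ := add_lt_add hx (by rw [dist_comm]; exact hy)
          _ = 2 * δ := by ring
      have h2 : dist (E x (l, m')) (E y (l, m')) ≤ dist (E x) (E y) :=
        dist_le_pi_dist (E x) (E y) (l, m')
      have h3 : ‖D x l m' - D y l m'‖ = dist (E x (l, m')) (E y (l, m')) := by
        rw [Complex.dist_eq]
      rw [h3]
      exact le_of_lt (lt_of_le_of_lt h2 h1)
    have hlt : (n:ℝ)^2 * (2*δ) < ε := by
      have hδε : 2 * ((n:ℝ)^2 + 1) * δ = ε := by
        rw [hδdef]; field_simp
      nlinarith [hδ]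
    simp only []
    rw [hm, hm, hm, hm]
    have hdiff : (D z * D x * D w) j k - (D z * D y * D w) j k
        = (D z * (D x - D y) * D w) j k := by
      rw [← Matrix.sub_apply]
      congr 1
      noncomm_ring
    rw [hdiff]
    refine lt_of_le_of_lt ?_ hlt
    rw [Matrix.mul_apply]
    calc ‖∑ m', (D z * (D x - D y)) j m' * D w m' k‖
        ≤ ∑ m', ‖(D z * (D x - D y)) j m' * D w m' k‖ :=
          norm_sum_le _ _
      _ ≤ ∑ _m' : Fin n, (n:ℝ) * (2*δ) := by
          apply Finset.sum_le_sum
          intro m' _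
          rw [norm_mul]
          have hCw : ‖D w m' k‖ ≤ 1 := entry_norm_bound_of_unitary (hu w) _ _
          have hAB : ‖(D z * (D x - D y)) j m'‖ ≤ (n:ℝ) * (2*δ) := by
            rw [Matrix.mul_apply]
            calc ‖∑ l, D z j l * (D x - D y) l m'‖
                ≤ ∑ l, ‖D z j l * (D x - D y) l m'‖ := norm_sum_le _ _
              _ ≤ ∑ _l : Fin n, 1 * (2*δ) := by
                  apply Finset.sum_le_sum
                  intro l _
                  rw [norm_mul]
                  exact mul_le_mul (entry_norm_bound_of_unitary (hu z) _ _)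
                    (by simpa [Matrix.sub_apply] using hxy l m')
                    (norm_nonneg _) zero_le_one
              _ = (n:ℝ) * (2*δ) := by
                  simp [Finset.sum_const, Finset.card_univ]
          calc ‖(D z * (D x - D y)) j m'‖ * ‖D w m' k‖
              ≤ ((n:ℝ) * (2*δ)) * 1 :=
                mul_le_mul hAB hCw (norm_nonneg _) (by positivity)
            _ = (n:ℝ) * (2*δ) := mul_one _
      _ = (n:ℝ)^2 * (2*δ) := by
          simp only [Finset.sum_const, Finset.card_univ, Fintype.card_fin, nsmul_eq_mul]
          ring

/-- If τ₁-AP functions are τ₂-AP, then τ₁-unitary reps are τ₂-unitary reps. -/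
lemma aux_rep_mono {G : Type*} [Group G] (τ₁ τ₂ : TopologicalSpace G)
    (hAP : APSet G τ₁ ⊆ APSet G τ₂) {n : ℕ} {D : G → Matrix (Fin n) (Fin n) ℂ}
    (h : @IsUnitaryRep G _ τ₁ n D) : @IsUnitaryRep G _ τ₂ n D := by
  obtain ⟨hc, hu, hm⟩ := h
  refine ⟨?_, hu, hm⟩
  letI := τ₂
  refine continuous_matrix fun j k => ?_
  have h1 : (fun g => D g j k) ∈ APSet G τ₁ := by
    refine ⟨aux_entry_ap D hu hm j k, ?_⟩
    exact @Continuous.matrix_elem G (Fin n) (Fin n) ℂ τ₁ _ D hc j k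
  exact (hAP h1).2

/-- Key topological lemma: if `τ, τ'` are both finer than a Hausdorff topology `σ`,
`τ'` is locally compact, and `σ`-compact sets are `τ`-compact, then `τ' ≤ τ`. -/
lemma aux_key {X : Type*} (τ σ τ' : TopologicalSpace X)
    (hστ : τ ≤ σ) (hστ' : τ' ≤ σ) (hT2 : @T2Space X σ)
    (hlc : @LocallyCompactSpace X τ')
    (hrc : ∀ s : Set X, @IsCompact X σ s → @IsCompact X τ s) :
    τ' ≤ τ := by
  intro U hU
  rw [@isOpen_iff_mem_nhds X τ' U]
  intro x hxU
  obtain ⟨K, hK_nhds, -, hK_comp⟩ :=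
    @LocallyCompactSpace.local_compact_nhds X τ' hlc x Set.univ Filter.univ_mem
  have hKσ : @IsCompact X σ K := by
    have := @IsCompact.image X X τ' σ K id hK_comp (continuous_id_iff_le.mpr hστ')
    simpa using this
  have hKτ : @IsCompact X τ K := hrc K hKσ
  have hKU : @IsCompact X τ (K \ U) := @IsCompact.diff X τ K U hKτ hU
  have hKUσ : @IsCompact X σ (K \ U) := by
    have := @IsCompact.image X X τ σ (K \ U) id hKU (continuous_id_iff_le.mpr hστ)
    simpa using this
  have hclosed : @IsClosed X σ (K \ U) := by
    letI := σ; haveI := hT2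
    exact hKUσ.isClosed
  have hVσ : @IsOpen X σ (K \ U)ᶜ := by
    letI := σ
    exact hclosed.isOpen_compl
  have hVτ' : @IsOpen X τ' (K \ U)ᶜ := hστ' _ hVσ
  have hxV : x ∈ (K \ U)ᶜ := fun hmem => hmem.2 hxU
  have hsub : (K \ U)ᶜ ∩ K ⊆ U := by
    rintro v ⟨hv1, hv2⟩
    by_contra h
    exact hv1 ⟨hv2, h⟩
  letI := τ'
  exact Filter.mem_of_superset (Filter.inter_mem (hVτ'.mem_nhds hxV) hK_nhds) hsub

end AuxProofs

/-- If `τ₁` and `τ₂` are two maximally almost periodic locally compact Hausdorff group topologies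
on a group `G`, both respecting compactness, with the same almost periodic functions, then
`τ₁ = τ₂`. -/
theorem unique_MAPLC_topology_respecting_compactness_of_same_AP
    {G : Type u} [Group G] (τ₁ τ₂ : TopologicalSpace G)
    (h₁grp : @IsTopologicalGroup G τ₁ _) (h₂grp : @IsTopologicalGroup G τ₂ _)
    (h₁lc : @LocallyCompactSpace G τ₁) (h₂lc : @LocallyCompactSpace G τ₂)
    (h₁t2 : @T2Space G τ₁) (h₂t2 : @T2Space G τ₂)
    (h₁map : @MAPGroup G _ τ₁) (h₂map : @MAPGroup G _ τ₂)
    (h₁rc : @RespectsCompactness G _ τ₁) (h₂rc : @RespectsCompactness G _ τ₂)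
    (hAP : APSet G τ₁ = APSet G τ₂) :
    τ₁ = τ₂ := by
  -- Step 1: the two topologies have the same unitary representations.
  have hRep : ∀ (n : ℕ) (D : G → Matrix (Fin n) (Fin n) ℂ),
      @IsUnitaryRep G _ τ₁ n D ↔ @IsUnitaryRep G _ τ₂ n D := fun n D =>
    ⟨fun h => aux_rep_mono τ₁ τ₂ hAP.le h, fun h => aux_rep_mono τ₂ τ₁ hAP.ge h⟩
  -- Step 2: the Bohr topologies coincide.
  have hbohr : @bohrTopology G _ τ₂ = @bohrTopology G _ τ₁ := by
    unfold bohrTopology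
    apply le_antisymm
    · exact le_iInf fun n => le_iInf fun D =>
        iInf_le_of_le n (iInf_le _ (⟨D.1, (hRep n D.1).mp D.2⟩ : {D : G → Matrix (Fin n) (Fin n) ℂ // @IsUnitaryRep G _ τ₂ n D}))
    · exact le_iInf fun n => le_iInf fun D =>
        iInf_le_of_le n (iInf_le _ (⟨D.1, (hRep n D.1).mpr D.2⟩ : {D : G → Matrix (Fin n) (Fin n) ℂ // @IsUnitaryRep G _ τ₁ n D}))
  -- Step 3: each topology is finer than its Bohr topology.
  have h₁le : τ₁ ≤ @bohrTopology G _ τ₁ :=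
    le_iInf fun n => le_iInf fun D => continuous_iff_le_induced.mp D.2.1
  have h₂le : τ₂ ≤ @bohrTopology G _ τ₁ := by
    rw [← hbohr]
    exact le_iInf fun n => le_iInf fun D => continuous_iff_le_induced.mp D.2.1
  -- Step 4: the Bohr topology is Hausdorff by MAP.
  have hT2 : @T2Space G (@bohrTopology G _ τ₁) := by
    refine @T2Space.mk G (@bohrTopology G _ τ₁) (fun x y hxy => ?_)
    obtain ⟨n, D, hD, hne⟩ := h₁map hxy
    have hDle : @bohrTopology G _ τ₁ ≤ TopologicalSpace.induced D inferInstance :=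
      iInf_le_of_le n (iInf_le _ (⟨D, hD⟩ : {D : G → Matrix (Fin n) (Fin n) ℂ // @IsUnitaryRep G _ τ₁ n D}))
    have hDc : @Continuous G _ (@bohrTopology G _ τ₁) _ D :=
      continuous_iff_le_induced.mpr hDle
    obtain ⟨u, v, hu, hv, hxu, hyv, huv⟩ := t2_separation hne
    letI : TopologicalSpace G := @bohrTopology G _ τ₁
    exact ⟨D ⁻¹' u, D ⁻¹' v, hDc.isOpen_preimage u hu, hDc.isOpen_preimage v hv, hxu, hyv, huv.preimage D⟩
  -- Step 5: combine.
  have h₁rc' : ∀ s : Set G, @IsCompact G (@bohrTopology G _ τ₁) s → @IsCompact G τ₁ s := h₁rc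
  have h₂rc' : ∀ s : Set G, @IsCompact G (@bohrTopology G _ τ₁) s → @IsCompact G τ₂ s := by
    intro s hs
    exact h₂rc s (by rw [hbohr]; exact hs)
  have h21 : τ₂ ≤ τ₁ := aux_key τ₁ (@bohrTopology G _ τ₁) τ₂ h₁le h₂le hT2 h₂lc h₁rc'
  have h12 : τ₁ ≤ τ₂ := aux_key τ₂ (@bohrTopology G _ τ₁) τ₁ h₂le h₁le hT2 h₁lc h₂rc'
  exact le_antisymm h12 h21

end
end

section
/- Let G be a σ-compact maximally almost periodic locally compact Hausdorff group, let H be a locally compact Hausdorff group, and let t : H → G be a group homomorphism that is continuous as a map from H into G endowed with its Bohr topology. Then t is continuous as a map from H into G with its original locally compact topology. -/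
open scoped BoundedContinuousFunction
open Topology Filter

noncomputable section

universe u
open scoped Pointwise in
/-- If an ultrafilter contains a set compact for a topology `τ₁` and converges for a coarser
Hausdorff topology `τ₂`, then it converges for `τ₁` (to the same point). -/
lemma ultrafilter_le_nhds_of_le_coarser {α : Type*} (τ₁ τ₂ : TopologicalSpace α)
    (hle : τ₁ ≤ τ₂) (hT2 : @T2Space α τ₂) {C : Set α} (hC : @IsCompact α τ₁ C)
    {F : Ultrafilter α} (hFC : C ∈ F) {x : α} (hx : ↑F ≤ @nhds α τ₂ x) :
    ↑F ≤ @nhds α τ₁ x := by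
  obtain ⟨y, -, hy⟩ :=
    @IsCompact.ultrafilter_le_nhds α τ₁ C hC F (Filter.le_principal_iff.2 hFC)
  have hmono : @nhds α τ₁ y ≤ @nhds α τ₂ y := _root_.nhds_mono (t₁ := τ₁) (t₂ := τ₂) hle
  have h2 : ↑F ≤ @nhds α τ₂ y := le_trans hy hmono
  have hxy : y = x := (@t2_iff_ultrafilter α τ₂).mp hT2 F h2 hx
  exact hxy ▸ hy

/-- Let `G` be a σ-compact maximally almost periodic locally compact Hausdorff group, `H` a
locally compact Hausdorff group, and `t : H → G` a group homomorphism that is continuous into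
`G` with its Bohr topology. Then `t` is continuous into `G` with its original topology. -/
theorem bohr_continuous_hom_is_continuous_sigmaCompact
    {G H : Type u} [Group G] [tG : TopologicalSpace G] [IsTopologicalGroup G]
    [LocallyCompactSpace G] [T2Space G] [SigmaCompactSpace G]
    [Group H] [tH : TopologicalSpace H] [IsTopologicalGroup H]
    [LocallyCompactSpace H] [T2Space H]
    (hGmap : MAPGroup G)
    (t : H → G) (hhom : ∀ a b : H, t (a * b) = t a * t b)
    (hbohr : @Continuous H G tH (bohrTopology G) t) :
    Continuous t := by
  classical
  open scoped Pointwise in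
  -- The original topology is finer than the Bohr topology.
  have hle : tG ≤ bohrTopology G :=
    le_iInf fun n => le_iInf fun D => continuous_iff_le_induced.mp D.2.1
  have hid : @Continuous G G tG (bohrTopology G) id := continuous_id_iff_le.mpr hle
  -- The Bohr topology is Hausdorff since `G` is MAP.
  have hT2 : @T2Space G (bohrTopology G) := by
    refine @T2Space.mk G (bohrTopology G) fun x y hxy => ?_
    obtain ⟨n, D, hD, hne⟩ := hGmap hxy
    have hDc : @Continuous G _ (bohrTopology G) _ D := by
      rw [continuous_iff_le_induced]
      exact iInf_le_of_le n (iInf_le _ (⟨D, hD⟩ : {D : G → Matrix (Fin n) (Fin n) ℂ // IsUnitaryRep n D}))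
    exact @separated_by_continuous G (Matrix (Fin n) (Fin n) ℂ) (bohrTopology G) _ _ D hDc x y hne
  -- `t` is a homomorphism, so `t 1 = 1`.
  have ht1 : t 1 = 1 := by
    have h := hhom 1 1
    rw [one_mul] at h
    exact (mul_left_cancel (a := t 1) (by rw [← h, mul_one])).symm
  -- Cover `G` by countably many translates of a compact neighbourhood of `1`.
  obtain ⟨W, hWc, hW1⟩ : ∃ W : Set G, IsCompact W ∧ W ∈ 𝓝 (1 : G) := exists_compact_mem_nhds 1
  obtain ⟨s, s_count, hs⟩ : ∃ s : Set G, s.Countable ∧ ⋃ g ∈ s, g • W = Set.univ :=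
    countable_cover_nhds_of_sigmaCompact fun g => by simpa using smul_mem_nhds_smul g hW1
  have : Encodable s := s_count.toEncodable
  -- Each preimage `t ⁻¹' (g • W)` is closed, since `g • W` is Bohr-compact hence Bohr-closed.
  have hclosed : ∀ g : s, IsClosed (t ⁻¹' ((g : G) • W)) := by
    intro g
    have hcG : IsCompact ((g : G) • W) := hWc.smul _
    have hcτ : @IsCompact G (bohrTopology G) ((g : G) • W) := by
      have h := @IsCompact.image G G tG (bohrTopology G) _ id hcG hid
      rwa [Set.image_id] at h
    have hcl : @IsClosed G (bohrTopology G) ((g : G) • W) :=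
      @IsCompact.isClosed G (bohrTopology G) hT2 _ hcτ
    exact @IsClosed.preimage H G tH (bohrTopology G) t hbohr _ hcl
  -- By Baire, one of them has nonempty interior.
  have hcover : ⋃ g : s, t ⁻¹' ((g : G) • W) = Set.univ := by
    refine Set.eq_univ_iff_forall.2 fun x => ?_
    have hx0 : t x ∈ (Set.univ : Set G) := Set.mem_univ _
    rw [← hs] at hx0
    obtain ⟨g, hg, hx⟩ := Set.mem_iUnion₂.1 hx0
    exact Set.mem_iUnion.2 ⟨⟨g, hg⟩, hx⟩
  obtain ⟨g, h₀, hh₀⟩ : ∃ g : s, (interior (t ⁻¹' ((g : G) • W))).Nonempty :=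
    nonempty_interior_of_iUnion_of_closed hclosed hcover
  set C : Set G := (g : G) • W with hC
  have hcC : IsCompact C := hWc.smul _
  -- `t` is continuous at `h₀`, via ultrafilters and the compact set `C`.
  have hCA : ContinuousAt t h₀ := by
    rw [ContinuousAt, tendsto_iff_ultrafilter]
    intro F hF
    have hmem : C ∈ Ultrafilter.map t F := by
      refine Filter.mem_map.2 (hF (mem_of_superset ?_ interior_subset))
      exact isOpen_interior.mem_nhds hh₀
    have hτ : ↑(Ultrafilter.map t F) ≤ @nhds G (bohrTopology G) (t h₀) := by
      rw [Ultrafilter.coe_map]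
      exact (@Continuous.tendsto H G tH (bohrTopology G) t hbohr h₀).mono_left hF
    have hres := @ultrafilter_le_nhds_of_le_coarser G tG (bohrTopology G) hle hT2 C hcC
      (Ultrafilter.map t F) hmem (t h₀) hτ
    rw [Ultrafilter.coe_map] at hres
    exact hres
  -- Transfer continuity at `h₀` to continuity at `1`.
  have hCA1 : ContinuousAt t 1 := by
    have key : (fun x : H => (t h₀)⁻¹ * t (h₀ * x)) = t := by
      funext x
      rw [hhom, inv_mul_cancel_left]
    have h1 : ContinuousAt (fun x : H => h₀ * x) 1 := (continuous_mul_left h₀).continuousAt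
    have h2 : ContinuousAt t ((fun x : H => h₀ * x) 1) := by simpa using hCA
    have h3 : ContinuousAt (fun x : H => t (h₀ * x)) 1 := h2.comp h1
    have h4 : ContinuousAt (fun x : H => (t h₀)⁻¹ * t (h₀ * x)) 1 :=
      continuousAt_const.mul h3
    rwa [key] at h4
  exact continuous_of_continuousAt_one
    ({ toFun := t, map_one' := ht1, map_mul' := hhom } : H →* G) hCA1

end
end

section
/- Let G be a maximally almost periodic locally compact Hausdorff group that respects compactness, let H be a locally compact Hausdorff group, and let t : H → G be a group homomorphism that is continuous as a map from H into G endowed with its Bohr topology. Then t is continuous as a map from H into G with its original locally compact topology. -/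
open scoped BoundedContinuousFunction

noncomputable section

universe u
open Filter Set Topology in
private lemma nhdsWithin_le_nhds_of_isCompact' {G : Type*} {t1 t2 : TopologicalSpace G}
    (h12 : t1 ≤ t2) (hT2 : @T2Space G t2) {C : Set G} (hC : @IsCompact G t1 C) {x : G} :
    @nhdsWithin G t2 x C ≤ @nhds G t1 x := by
  intro U hU
  obtain ⟨V, hVU, hVo, hxV⟩ := (@mem_nhds_iff G t1 x U).mp hU
  have hFc : @IsCompact G t1 (C \ V) := @IsCompact.diff G t1 C V hC hVo
  have hFc2 : @IsCompact G t2 (C \ V) := by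
    have := @IsCompact.image G G t1 t2 (C \ V) id hFc (continuous_id_of_le h12)
    rwa [Set.image_id] at this
  have hFcl : @IsClosed G t2 (C \ V) := @IsCompact.isClosed G t2 hT2 _ hFc2
  refine (@mem_nhdsWithin G t2 U x C).mpr ⟨(C \ V)ᶜ, hFcl.isOpen_compl, ?_, ?_⟩
  · simp only [Set.mem_compl_iff, Set.mem_diff, not_and, not_not]
    exact fun _ => hxV
  · rintro y ⟨hy1, hy2⟩
    simp only [Set.mem_compl_iff, Set.mem_diff, not_and, not_not] at hy1
    exact hVU (hy1 hy2)

private lemma bohr_t2' {G : Type*} [Group G] [TopologicalSpace G] (hGmap : MAPGroup G) :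
    @T2Space G (bohrTopology G) := by
  refine @T2Space.mk G (bohrTopology G) fun x y hxy => ?_
  obtain ⟨n, D, hrep, hne⟩ := hGmap hxy
  have hDb : @Continuous G _ (bohrTopology G) _ D := by
    rw [continuous_iff_le_induced]
    exact iInf_le_of_le n (iInf_le _ (⟨D, hrep⟩ : {D // IsUnitaryRep n D}))
  exact @separated_by_continuous G (Matrix (Fin n) (Fin n) ℂ) (bohrTopology G) _ _ _ hDb x y hne

/-- Let `G` be a maximally almost periodic locally compact Hausdorff group that respects
compactness, `H` a locally compact Hausdorff group, and `t : H → G` a group homomorphism that is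
continuous into `G` with its Bohr topology. Then `t` is continuous into `G` with its original
topology. -/
theorem bohr_continuous_hom_is_continuous_respectsCompactness
    {G H : Type u} [Group G] [tG : TopologicalSpace G] [IsTopologicalGroup G]
    [LocallyCompactSpace G] [T2Space G]
    [Group H] [tH : TopologicalSpace H] [IsTopologicalGroup H]
    [LocallyCompactSpace H] [T2Space H]
    (hGmap : MAPGroup G) (hGrc : RespectsCompactness G)
    (t : H → G) (hhom : ∀ a b : H, t (a * b) = t a * t b)
    (hbohr : @Continuous H G tH (bohrTopology G) t) :
    Continuous t := by
  have hle : tG ≤ bohrTopology G :=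
    le_iInf fun n => le_iInf fun D => continuous_iff_le_induced.mp D.2.1
  have hT2 : @T2Space G (bohrTopology G) := bohr_t2' hGmap
  rw [continuous_iff_continuousAt]
  intro x
  obtain ⟨K, hKc, hKn⟩ := exists_compact_mem_nhds x
  have hCb : @IsCompact G (bohrTopology G) (t '' K) :=
    @IsCompact.image H G tH (bohrTopology G) K t hKc hbohr
  have hCt : IsCompact (t '' K) := hGrc _ hCb
  have h1 : Filter.Tendsto t (nhds x) (@nhdsWithin G (bohrTopology G) (t x) (t '' K)) :=
    Filter.tendsto_inf.mpr ⟨@Continuous.continuousAt H G tH (bohrTopology G) t x hbohr,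
      Filter.tendsto_principal.mpr (Filter.eventually_of_mem hKn fun y hy => ⟨y, hy, rfl⟩)⟩
  exact h1.mono_right (nhdsWithin_le_nhds_of_isCompact' hle hT2 hCt)

end
end
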